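/- arXiv:2309.02566 — 5 statements merged into one kernel-verified Lean document; each statement's English description precedes it below -/
import Mathlib

section
/- Suppose the (n+1)×(n+1) Hermitian Toeplitz matrix built from f₀,…,f_n (with entries T_{jk} = f_{j−k} for j ≥ k and conj(f_{k−j}) otherwise, and f₀ real) is positive semidefinite. Then there exists a complex number f_{n+1} with |f_{n+1}| ≤ f₀ such that the (n+2)×(n+2) Hermitian Toeplitz matrix built from f₀,…,f_{n+1} is also positive semidefinite. -/
open Matrix ComplexOrder

lemma cs_re {m : ℕ} (x y : Fin m → ℂ) (h : star x ⬝ᵥ x = star x ⬝ᵥ y) :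
    (star x ⬝ᵥ x).re ≤ (star y ⬝ᵥ y).re := by
  set x' : EuclideanSpace ℂ (Fin m) := (WithLp.equiv 2 _).symm x with hx'
  set y' : EuclideanSpace ℂ (Fin m) := (WithLp.equiv 2 _).symm y with hy'
  have h1 : inner ℂ x' x' = star x ⬝ᵥ x := by rw [dotProduct_comm]; rfl
  have h2 : inner ℂ x' y' = star x ⬝ᵥ y := by rw [dotProduct_comm]; rfl
  have h3 : inner ℂ y' y' = star y ⬝ᵥ y := by rw [dotProduct_comm]; rfl
  have hxx : (star x ⬝ᵥ x).re = ‖x'‖ ^ 2 := by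
    rw [← h1]; exact_mod_cast inner_self_eq_norm_sq (𝕜 := ℂ) x'
  have hyy : (star y ⬝ᵥ y).re = ‖y'‖ ^ 2 := by
    rw [← h3]; exact_mod_cast inner_self_eq_norm_sq (𝕜 := ℂ) y'
  have hle : ‖(inner ℂ x' y' : ℂ)‖ ≤ ‖x'‖ * ‖y'‖ := norm_inner_le_norm x' y'
  have hre : ‖x'‖^2 ≤ ‖(inner ℂ x' y' : ℂ)‖ := by
    rw [← hxx, h, ← h2]
    exact Complex.re_le_norm _
  rw [hxx, hyy]
  nlinarith [norm_nonneg x', norm_nonneg y']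

lemma cs_abs {m : ℕ} (x y : Fin m → ℂ) :
    ‖star x ⬝ᵥ y‖ ≤ Real.sqrt (star x ⬝ᵥ x).re * Real.sqrt (star y ⬝ᵥ y).re := by
  set x' : EuclideanSpace ℂ (Fin m) := (WithLp.equiv 2 _).symm x with hx'
  set y' : EuclideanSpace ℂ (Fin m) := (WithLp.equiv 2 _).symm y with hy'
  have h1 : inner ℂ x' x' = star x ⬝ᵥ x := by rw [dotProduct_comm]; rfl
  have h2 : inner ℂ x' y' = star x ⬝ᵥ y := by rw [dotProduct_comm]; rfl
  have h3 : inner ℂ y' y' = star y ⬝ᵥ y := by rw [dotProduct_comm]; rfl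
  have hxx : (star x ⬝ᵥ x).re = ‖x'‖ ^ 2 := by
    rw [← h1]; exact_mod_cast inner_self_eq_norm_sq (𝕜 := ℂ) x'
  have hyy : (star y ⬝ᵥ y).re = ‖y'‖ ^ 2 := by
    rw [← h3]; exact_mod_cast inner_self_eq_norm_sq (𝕜 := ℂ) y'
  rw [hxx, hyy, Real.sqrt_sq (norm_nonneg _), Real.sqrt_sq (norm_nonneg _), ← h2]
  exact norm_inner_le_norm x' y'

lemma range_AHA {m k : ℕ} (A : Matrix (Fin m) (Fin k) ℂ) (u : Fin k → ℂ)
    (hu : ∃ z, Aᴴ *ᵥ z = u) : ∃ p, (Aᴴ * A) *ᵥ p = u := by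
  have hle : LinearMap.range (Aᴴ * A).mulVecLin ≤ LinearMap.range Aᴴ.mulVecLin := by
    rw [Matrix.mulVecLin_mul]
    exact LinearMap.range_comp_le_range _ _
  have hrank : (Aᴴ * A).rank = Aᴴ.rank := by
    rw [Matrix.rank_conjTranspose_mul_self, Matrix.rank_conjTranspose]
  have heq : LinearMap.range (Aᴴ * A).mulVecLin = LinearMap.range Aᴴ.mulVecLin := by
    apply Submodule.eq_of_le_of_finrank_le hle
    exact le_of_eq hrank.symm
  obtain ⟨z, hz⟩ := hu
  have : u ∈ LinearMap.range (Aᴴ * A).mulVecLin := by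
    rw [heq]; exact ⟨z, hz⟩
  obtain ⟨p, hp⟩ := this
  exact ⟨p, hp⟩

lemma dot_AHA {m k : ℕ} (A : Matrix (Fin m) (Fin k) ℂ) (u z : Fin k → ℂ) :
    star u ⬝ᵥ ((Aᴴ * A) *ᵥ z) = star (A *ᵥ u) ⬝ᵥ (A *ᵥ z) := by
  rw [← mulVec_mulVec, dotProduct_mulVec, star_mulVec]

lemma dot_AH {m k : ℕ} (A : Matrix (Fin m) (Fin k) ℂ) (u : Fin k → ℂ) (y : Fin m → ℂ) :
    star u ⬝ᵥ (Aᴴ *ᵥ y) = star (A *ᵥ u) ⬝ᵥ y := by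
  rw [dotProduct_mulVec, star_mulVec]

lemma dot_swap {k : ℕ} (B : Matrix (Fin k) (Fin k) ℂ) (hB : B.IsHermitian)
    (p q : Fin k → ℂ) :
    star q ⬝ᵥ (B *ᵥ p) = starRingEnd ℂ (star p ⬝ᵥ (B *ᵥ q)) := by
  calc star q ⬝ᵥ (B *ᵥ p) = (star q ᵥ* B) ⬝ᵥ p := dotProduct_mulVec _ _ _
    _ = (star q ᵥ* Bᴴ) ⬝ᵥ p := by rw [hB.eq]
    _ = star (B *ᵥ q) ⬝ᵥ p := by rw [star_mulVec]
    _ = star (star p ⬝ᵥ (B *ᵥ q)) := star_dotProduct _ _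
    _ = starRingEnd ℂ (star p ⬝ᵥ (B *ᵥ q)) := rfl

lemma dot_col {k : ℕ} (B : Matrix (Fin k) (Fin k) ℂ) (hB : B.IsHermitian)
    (y : Fin k → ℂ) (b : Fin k) :
    star y ⬝ᵥ (B *ᵥ Pi.single b 1) = starRingEnd ℂ ((B *ᵥ y) b) := by
  rw [dotProduct_mulVec, dotProduct_single (x := (1:ℂ)) (i := b), mul_one,
    show star y ᵥ* B = star y ᵥ* Bᴴ from by rw [hB.eq], ← star_mulVec]
  rfl

lemma single_dot {k : ℕ} (y : Fin k → ℂ) (a : Fin k) :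
    star (Pi.single a (1:ℂ)) ⬝ᵥ y = y a := by
  have : star (Pi.single a (1:ℂ)) = (Pi.single a 1 : Fin k → ℂ) := by
    ext i
    simp [Pi.single_apply, apply_ite]
  rw [this, single_dotProduct, one_mul]

theorem toeplitz_one_step_extension (n : ℕ) (f : ℕ → ℂ) (h0 : (f 0).im = 0)
    (hpsd : (Matrix.of fun j k : Fin (n + 1) =>
        if (k : ℕ) ≤ (j : ℕ) then f ((j : ℕ) - (k : ℕ))
        else starRingEnd ℂ (f ((k : ℕ) - (j : ℕ)))).PosSemidef) :
    ∃ c : ℂ, ‖c‖ ≤ (f 0).re ∧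
      (Matrix.of fun j k : Fin (n + 2) =>
        if (k : ℕ) ≤ (j : ℕ) then Function.update f (n + 1) c ((j : ℕ) - (k : ℕ))
        else starRingEnd ℂ (Function.update f (n + 1) c ((k : ℕ) - (j : ℕ)))).PosSemidef := by
  classical
  set T : Matrix (Fin (n+1)) (Fin (n+1)) ℂ := Matrix.of fun j k : Fin (n + 1) =>
        if (k : ℕ) ≤ (j : ℕ) then f ((j : ℕ) - (k : ℕ))
        else starRingEnd ℂ (f ((k : ℕ) - (j : ℕ))) with hTdef
  obtain ⟨C, hC⟩ : ∃ C : Matrix (Fin (n+1)) (Fin (n+1)) ℂ, T = Cᴴ * C := by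
    open scoped MatrixOrder in
    refine ⟨CFC.sqrt T, ?_⟩
    have hT : 0 ≤ T := hpsd.nonneg
    have hs := (CFC.sqrt_nonneg T).isSelfAdjoint
    rw [IsSelfAdjoint, star_eq_conjTranspose] at hs
    rw [hs, CFC.sqrt_mul_sqrt_self T hT]
  set A : Matrix (Fin (n+1)) (Fin n) ℂ := C.submatrix id Fin.succ with hAdef
  set A' : Matrix (Fin (n+1)) (Fin n) ℂ := C.submatrix id Fin.castSucc with hA'def
  set B : Matrix (Fin n) (Fin n) ℂ := Matrix.of fun j k : Fin n =>
        if (k : ℕ) ≤ (j : ℕ) then f ((j : ℕ) - (k : ℕ))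
        else starRingEnd ℂ (f ((k : ℕ) - (j : ℕ))) with hBdef
  set v : Fin n → ℂ := fun i => f ((i : ℕ) + 1) with hvdef
  set w : Fin n → ℂ := fun i => starRingEnd ℂ (f (n - (i : ℕ))) with hwdef
  have hCC : ∀ j k : Fin (n+1), T j k = star (fun a => C a j) ⬝ᵥ (fun a => C a k) := by
    intro j k
    rw [hC]
    simp [Matrix.mul_apply, dotProduct, Matrix.conjTranspose_apply]
  have hBA : B = Aᴴ * A := by
    ext i j
    have h1 : (Aᴴ * A) i j = T i.succ j.succ := by
      rw [hCC]
      simp [Matrix.mul_apply, dotProduct, Matrix.conjTranspose_apply, hAdef]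
    rw [h1, hTdef, hBdef]
    simp only [Matrix.of_apply, Fin.val_succ]
    by_cases hle : (j : ℕ) ≤ (i : ℕ)
    · rw [if_pos hle, if_pos (by omega), Nat.succ_sub_succ]
    · rw [if_neg hle, if_neg (by omega), Nat.succ_sub_succ]
  have hBA' : B = A'ᴴ * A' := by
    ext i j
    have h1 : (A'ᴴ * A') i j = T i.castSucc j.castSucc := by
      rw [hCC]
      simp [Matrix.mul_apply, dotProduct, Matrix.conjTranspose_apply, hA'def]
    rw [h1, hTdef, hBdef]
    simp only [Matrix.of_apply, Fin.coe_castSucc]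
  have hv : Aᴴ *ᵥ (fun a => C a 0) = v := by
    ext i
    have h1 : (Aᴴ *ᵥ (fun a => C a 0)) i = T i.succ 0 := by
      rw [hCC]
      simp [Matrix.mulVec, dotProduct, Matrix.conjTranspose_apply, hAdef]
    rw [h1, hTdef, hvdef]
    simp
  have hw : A'ᴴ *ᵥ (fun a => C a (Fin.last n)) = w := by
    ext i
    have h1 : (A'ᴴ *ᵥ (fun a => C a (Fin.last n))) i = T i.castSucc (Fin.last n) := by
      rw [hCC]
      simp [Matrix.mulVec, dotProduct, Matrix.conjTranspose_apply, hA'def]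
    rw [h1, hTdef, hwdef]
    simp only [Matrix.of_apply, Fin.coe_castSucc, Fin.val_last]
    rw [if_neg (by omega)]
  have hf0 : star (fun a : Fin (n+1) => C a 0) ⬝ᵥ (fun a => C a 0) = f 0 := by
    rw [← hCC 0 0, hTdef]
    simp
  have hf0l : star (fun a : Fin (n+1) => C a (Fin.last n)) ⬝ᵥ (fun a => C a (Fin.last n))
      = f 0 := by
    rw [← hCC (Fin.last n) (Fin.last n), hTdef]
    simp
  obtain ⟨p, hp⟩ : ∃ p, B *ᵥ p = v := by
    obtain ⟨p, hp⟩ := range_AHA A v ⟨_, hv⟩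
    exact ⟨p, by rw [hBA]; exact hp⟩
  obtain ⟨q, hq⟩ : ∃ q, B *ᵥ q = w := by
    obtain ⟨q, hq⟩ := range_AHA A' w ⟨_, hw⟩
    exact ⟨q, by rw [hBA']; exact hq⟩
  have hBpsd : B.PosSemidef := by
    rw [hBA]; exact Matrix.posSemidef_conjTranspose_mul_self A
  have hBH : B.IsHermitian := hBpsd.isHermitian
  -- real nonneg quantities
  have hsP : 0 ≤ star p ⬝ᵥ (B *ᵥ p) := hBpsd.dotProduct_mulVec_nonneg p
  have hsQ : 0 ≤ star q ⬝ᵥ (B *ᵥ q) := hBpsd.dotProduct_mulVec_nonneg q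
  have hsPre : 0 ≤ (star p ⬝ᵥ (B *ᵥ p)).re := by
    have := (Complex.le_def.mp hsP).1; simpa using this
  have hsPim : (star p ⬝ᵥ (B *ᵥ p)).im = 0 := by
    have := (Complex.le_def.mp hsP).2; simpa using this.symm
  have hsQre : 0 ≤ (star q ⬝ᵥ (B *ᵥ q)).re := by
    have := (Complex.le_def.mp hsQ).1; simpa using this
  have hsQim : (star q ⬝ᵥ (B *ᵥ q)).im = 0 := by
    have := (Complex.le_def.mp hsQ).2; simpa using this.symm
  -- bounds
  have hPAA : star p ⬝ᵥ (B *ᵥ p) = star (A *ᵥ p) ⬝ᵥ (A *ᵥ p) := by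
    rw [hBA]; exact dot_AHA A p p
  have hQAA : star q ⬝ᵥ (B *ᵥ q) = star (A *ᵥ q) ⬝ᵥ (A *ᵥ q) := by
    rw [hBA]; exact dot_AHA A q q
  have hQAA' : star q ⬝ᵥ (B *ᵥ q) = star (A' *ᵥ q) ⬝ᵥ (A' *ᵥ q) := by
    rw [hBA']; exact dot_AHA A' q q
  have hPle : (star (A *ᵥ p) ⬝ᵥ (A *ᵥ p)).re ≤ (f 0).re := by
    have hstep : star (A *ᵥ p) ⬝ᵥ (A *ᵥ p) = star (A *ᵥ p) ⬝ᵥ (fun a => C a 0) := by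
      rw [← hPAA, hp, ← hv]
      exact dot_AH A p _
    have := cs_re (A *ᵥ p) (fun a => C a 0) hstep
    rwa [hf0] at this
  have hQle : (star (A' *ᵥ q) ⬝ᵥ (A' *ᵥ q)).re ≤ (f 0).re := by
    have hstep : star (A' *ᵥ q) ⬝ᵥ (A' *ᵥ q)
        = star (A' *ᵥ q) ⬝ᵥ (fun a => C a (Fin.last n)) := by
      rw [← hQAA', hq, ← hw]
      exact dot_AH A' q _
    have := cs_re (A' *ᵥ q) (fun a => C a (Fin.last n)) hstep
    rwa [hf0l] at this
  have hPle' : (star p ⬝ᵥ (B *ᵥ p)).re ≤ (f 0).re := by rw [hPAA]; exact hPle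
  have hQle' : (star q ⬝ᵥ (B *ᵥ q)).re ≤ (f 0).re := by rw [hQAA']; exact hQle
  have hf0re : 0 ≤ (f 0).re := le_trans hsPre hPle'
  set c : ℂ := starRingEnd ℂ (star p ⬝ᵥ (B *ᵥ q)) with hcdef
  have habs : ‖c‖ ≤ (f 0).re := by
    have h1 : ‖c‖ = ‖star p ⬝ᵥ (B *ᵥ q)‖ := by
      rw [hcdef]; exact Complex.norm_conj _
    have h2 : star p ⬝ᵥ (B *ᵥ q) = star (A *ᵥ p) ⬝ᵥ (A *ᵥ q) := by
      rw [hBA]; exact dot_AHA A p q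
    have h3 := cs_abs (A *ᵥ p) (A *ᵥ q)
    have h4 : Real.sqrt (star (A *ᵥ p) ⬝ᵥ (A *ᵥ p)).re ≤ Real.sqrt (f 0).re :=
      Real.sqrt_le_sqrt hPle
    have h5 : Real.sqrt (star (A *ᵥ q) ⬝ᵥ (A *ᵥ q)).re ≤ Real.sqrt (f 0).re := by
      apply Real.sqrt_le_sqrt
      rw [← hQAA, hQAA']
      exact hQle
    calc ‖c‖ = ‖star (A *ᵥ p) ⬝ᵥ (A *ᵥ q)‖ := by rw [h1, h2]
      _ ≤ Real.sqrt (star (A *ᵥ p) ⬝ᵥ (A *ᵥ p)).re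
          * Real.sqrt (star (A *ᵥ q) ⬝ᵥ (A *ᵥ q)).re := h3
      _ ≤ Real.sqrt (f 0).re * Real.sqrt (f 0).re := by
          apply mul_le_mul h4 h5 (Real.sqrt_nonneg _) (Real.sqrt_nonneg _)
      _ = (f 0).re := Real.mul_self_sqrt hf0re
  set d : Fin (n+2) → ℂ := fun j =>
      if (j:ℕ) = 0 then f 0 - star p ⬝ᵥ (B *ᵥ p)
      else if (j:ℕ) = n+1 then f 0 - star q ⬝ᵥ (B *ᵥ q) else 0 with hddef
  have hdpsd : (Matrix.diagonal d).PosSemidef := by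
    rw [Matrix.posSemidef_diagonal_iff]
    intro i
    rw [hddef]
    dsimp only
    split_ifs
    · rw [Complex.le_def]
      constructor
      · simp only [Complex.zero_re, Complex.sub_re]; linarith
      · simp [Complex.sub_im, h0, hsPim]
    · rw [Complex.le_def]
      constructor
      · simp only [Complex.zero_re, Complex.sub_re]; linarith
      · simp [Complex.sub_im, h0, hsQim]
    · exact le_refl 0
  set R : Matrix (Fin n) (Fin (n+2)) ℂ := Matrix.of fun i j =>
      if (j:ℕ) = 0 then p i else if (j:ℕ) = n+1 then q i
      else if (j:ℕ) = (i:ℕ)+1 then 1 else 0 with hRdef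
  have hRBR : ∀ j k, (Rᴴ * B * R) j k
      = star (fun i => R i j) ⬝ᵥ (B *ᵥ fun i => R i k) := by
    intro j k
    rw [Matrix.mul_assoc]
    simp only [Matrix.mul_apply, Matrix.conjTranspose_apply, dotProduct, Matrix.mulVec,
      Finset.mul_sum, Pi.star_apply]
  have hcol0 : (fun i => R i (Fin.castSucc 0)) = p := by
    ext i; rw [hRdef]; simp
  have hcolL : (fun i => R i (Fin.last (n+1))) = q := by
    ext i; rw [hRdef]; simp
  have hcolM : ∀ a : Fin n, (fun i => R i (Fin.castSucc a.succ)) = Pi.single a 1 := by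
    intro a; ext i
    rw [hRdef]
    simp only [Matrix.of_apply, Fin.coe_castSucc, Fin.val_succ, Pi.single_apply]
    have ha := a.isLt
    have hi := i.isLt
    rw [if_neg (by omega), if_neg (by omega)]
    by_cases h : i = a
    · subst h; rw [if_pos rfl, if_pos rfl]
    · rw [if_neg (by simp [Fin.ext_iff] at h ⊢; omega), if_neg h]
  refine ⟨c, habs, ?_⟩
  have heq : (Matrix.of fun j k : Fin (n + 2) =>
        if (k : ℕ) ≤ (j : ℕ) then Function.update f (n + 1) c ((j : ℕ) - (k : ℕ))
        else starRingEnd ℂ (Function.update f (n + 1) c ((k : ℕ) - (j : ℕ))))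
      = Rᴴ * B * R + Matrix.diagonal d := by
    ext j k
    rw [Matrix.add_apply, hRBR j k]
    induction j using Fin.lastCases with
    | last =>
      induction k using Fin.lastCases with
      | last =>
        rw [hcolL, Matrix.diagonal_apply_eq]
        have hd : d (Fin.last (n+1)) = f 0 - star q ⬝ᵥ (B *ᵥ q) := by
          rw [hddef]; dsimp only; rw [Fin.val_last, if_neg (by omega), if_pos rfl]
        rw [hd]
        simp only [Matrix.of_apply, Fin.val_last]
        rw [if_pos le_rfl, Nat.sub_self, Function.update_apply, if_neg (by omega)]
        ring
      | cast k' =>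
        induction k' using Fin.cases with
        | zero =>
          rw [hcolL, hcol0, Matrix.diagonal_apply_ne _ (by simp [Fin.ext_iff]),
            dot_swap B hBH p q, ← hcdef]
          rw [Matrix.of_apply, Fin.val_last, Fin.coe_castSucc, Fin.val_zero]
          rw [if_pos (by omega), Nat.sub_zero, Function.update_apply, if_pos rfl]
          ring
        | succ b =>
          have hb := b.isLt
          rw [hcolL, hcolM b,
            Matrix.diagonal_apply_ne _ (by simp [Fin.ext_iff]; omega),
            dot_col B hBH q b, hq]
          rw [hwdef]
          simp only [Matrix.of_apply, Fin.val_last, Fin.coe_castSucc, Fin.val_succ]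
          rw [if_pos (by omega), Nat.succ_sub_succ, Function.update_apply,
            if_neg (by omega), Complex.conj_conj]
          ring
    | cast j' =>
      induction j' using Fin.cases with
      | zero =>
        induction k using Fin.lastCases with
        | last =>
          rw [hcol0, hcolL, Matrix.diagonal_apply_ne _ (by simp [Fin.ext_iff])]
          have hcc : star p ⬝ᵥ (B *ᵥ q) = starRingEnd ℂ c := by
            rw [hcdef, Complex.conj_conj]
          rw [hcc]
          rw [Matrix.of_apply, Fin.val_last, Fin.coe_castSucc, Fin.val_zero]
          rw [if_neg (by omega), Nat.sub_zero, Function.update_apply, if_pos rfl]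
          ring
        | cast k' =>
          induction k' using Fin.cases with
          | zero =>
            rw [hcol0, Matrix.diagonal_apply_eq]
            have hd : d (Fin.castSucc 0) = f 0 - star p ⬝ᵥ (B *ᵥ p) := by
              rw [hddef]; dsimp only
              rw [Fin.coe_castSucc, Fin.val_zero, if_pos rfl]
            rw [hd]
            rw [Matrix.of_apply, Fin.coe_castSucc, Fin.val_zero]
            rw [if_pos le_rfl, Nat.sub_self, Function.update_apply, if_neg (by omega)]
            ring
          | succ b =>
            have hb := b.isLt
            rw [hcol0, hcolM b,
              Matrix.diagonal_apply_ne _ (by simp [Fin.ext_iff]),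
              dot_col B hBH p b, hp]
            rw [hvdef]
            rw [Matrix.of_apply, Fin.coe_castSucc, Fin.coe_castSucc, Fin.val_zero, Fin.val_succ]
            rw [if_neg (by omega), Nat.sub_zero, Function.update_apply, if_neg (by omega)]
            ring
      | succ a =>
        have ha := a.isLt
        induction k using Fin.lastCases with
        | last =>
          rw [hcolM a, hcolL,
            Matrix.diagonal_apply_ne _ (by simp [Fin.ext_iff]; omega),
            single_dot (B *ᵥ q) a, hq]
          rw [hwdef]
          simp only [Matrix.of_apply, Fin.val_last, Fin.coe_castSucc, Fin.val_succ]
          rw [if_neg (by omega), Nat.succ_sub_succ, Function.update_apply, if_neg (by omega)]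
          ring
        | cast k' =>
          induction k' using Fin.cases with
          | zero =>
            rw [hcolM a, hcol0,
              Matrix.diagonal_apply_ne _ (by simp [Fin.ext_iff]),
              single_dot (B *ᵥ p) a, hp]
            rw [hvdef]
            rw [Matrix.of_apply, Fin.coe_castSucc, Fin.coe_castSucc, Fin.val_zero, Fin.val_succ]
            rw [if_pos (by omega), Nat.sub_zero, Function.update_apply, if_neg (by omega)]
            ring
          | succ b =>
            have hb := b.isLt
            rw [hcolM a, hcolM b, single_dot (B *ᵥ Pi.single b 1) a]
            have hmv : (B *ᵥ Pi.single b (1:ℂ)) a = B a b := by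
              rw [Matrix.mulVec_single]; exact mul_one _
            rw [hmv]
            have hd0 : Matrix.diagonal d (Fin.castSucc a.succ) (Fin.castSucc b.succ) = 0 := by
              rw [Matrix.diagonal_apply]
              split_ifs with h
              · rw [hddef]; dsimp only
                rw [Fin.coe_castSucc, Fin.val_succ, if_neg (by omega), if_neg (by omega)]
              · rfl
            rw [hd0, add_zero]
            rw [hBdef]
            simp only [Matrix.of_apply, Fin.coe_castSucc, Fin.val_succ]
            by_cases hab : (b : ℕ) ≤ (a : ℕ)
            · rw [if_pos (by omega), if_pos hab, Nat.succ_sub_succ,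
                Function.update_apply, if_neg (by omega)]
            · rw [if_neg (by omega), if_neg hab, Nat.succ_sub_succ,
                Function.update_apply, if_neg (by omega)]
  rw [heq]
  exact Matrix.PosSemidef.add (hBpsd.conjTranspose_mul_mul_same R) hdpsd
end

section
/- Every positive definite function f defined on the finite set {−n,…,n} ⊂ ℤ (meaning the (n+1)×(n+1) Toeplitz matrix [f(j−k)] is PSD and f(−m)=conj(f(m))) extends to a positive definite function on all of ℤ. -/
noncomputable section
namespace PDExt
open Matrix Complex ComplexOrder

def Tm (g : ℤ → ℂ) (N : ℕ) : Matrix (Fin N) (Fin N) ℂ :=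
  Matrix.of fun j k => g ((j : ℤ) - (k : ℤ))

def Sym (g : ℤ → ℂ) : Prop := ∀ m : ℤ, g (-m) = starRingEnd ℂ (g m)

lemma Tm_herm {g : ℤ → ℂ} (hg : Sym g) (N : ℕ) : (Tm g N).IsHermitian := by
  ext j k
  simp only [Tm, conjTranspose_apply, of_apply]
  rw [show ((j:ℤ) - (k:ℤ)) = -((k:ℤ) - (j:ℤ)) by ring, hg]
  rfl

def upd (g : ℤ → ℂ) (p : ℤ) (x : ℂ) : ℤ → ℂ :=
  fun m => if m = p then x else if m = -p then starRingEnd ℂ x else g m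

lemma upd_eq {g : ℤ → ℂ} {p : ℤ} {x : ℂ} {m : ℤ} (h1 : m ≠ p) (h2 : m ≠ -p) :
    upd g p x m = g m := by simp [upd, h1, h2]

lemma upd_sym {g : ℤ → ℂ} (hg : Sym g) {p : ℤ} (hp : 0 < p) (x : ℂ) : Sym (upd g p x) := by
  intro m
  unfold upd
  rcases eq_or_ne m p with h1 | h1
  · rw [if_neg (by omega), if_pos (by omega), if_pos h1]
  · rcases eq_or_ne m (-p) with h2 | h2
    · rw [if_pos (by omega), if_neg h1, if_pos h2, Complex.conj_conj]
    · rw [if_neg (by omega), if_neg (by omega), if_neg h1, if_neg h2]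
      exact hg m

lemma posDef_of_posSemidef_det_ne_zero {m : Type*} [Fintype m] [DecidableEq m]
    {M : Matrix m m ℂ} (h : M.PosSemidef) (hd : M.det ≠ 0) : M.PosDef := by
  refine PosDef.of_dotProduct_mulVec_pos h.1 fun x hx => ?_
  rcases (h.dotProduct_mulVec_nonneg x).lt_or_eq with h1 | h1
  · exact h1
  · exfalso
    have hMx : M *ᵥ x = 0 := (h.dotProduct_mulVec_zero_iff x).mp h1.symm
    have : x = 0 := by
      have := congrArg (fun v => M⁻¹ *ᵥ v) hMx
      simpa [Matrix.mulVec_mulVec, Matrix.nonsing_inv_mul M (isUnit_iff_ne_zero.mpr hd)] using this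
    exact hx this

lemma posDef_submatrix_equiv {l m : Type*} [Fintype l] [Fintype m] [DecidableEq l] [DecidableEq m]
    {M : Matrix m m ℂ} (hM : M.PosDef) (e : l ≃ m) : (M.submatrix e e).PosDef := by
  refine PosDef.of_dotProduct_mulVec_pos (hM.1.submatrix e) fun x hx => ?_
  have hx' : x ∘ e.symm ≠ 0 := fun h => hx (funext fun i => by simpa using congrFun h (e i))
  have h2 := hM.dotProduct_mulVec_pos hx'
  convert h2 using 1
  simp only [dotProduct, Matrix.mulVec, Matrix.submatrix_apply, Pi.star_apply,
    Function.comp_apply]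
  refine Fintype.sum_equiv e _ _ fun i => ?_
  rw [e.symm_apply_apply]
  congr 1
  refine Fintype.sum_equiv e _ _ fun j => ?_
  rw [e.symm_apply_apply]

lemma step (g : ℤ → ℂ) (N : ℕ) (hg : Sym g) (hT : (Tm g (N+1)).PosDef) :
    ∃ x : ℂ, Sym (upd g ((N:ℤ)+1) x) ∧ (Tm (upd g ((N:ℤ)+1) x) (N+2)).PosDef := by
  classical
  set T := Tm g (N+1) with hTdef
  set S := Tm g N with hSdef
  set v : Fin N → ℂ := fun i => g ((i:ℤ) - (N:ℤ)) with hvdef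
  set vc : Matrix (Fin N) (Fin 1) ℂ := Matrix.of (fun i _ => v i) with hvcdef
  set g0m : Matrix (Fin 1) (Fin 1) ℂ := Matrix.of (fun _ _ => g 0) with hg0mdef
  let e1 : Fin N ⊕ Fin 1 ≃ Fin (N+1) := finSumFinEquiv
  have hTb : T.submatrix e1 e1 = fromBlocks S vc vcᴴ g0m := by
    ext a b
    cases a with
    | inl i =>
      cases b with
      | inl k =>
        simp [e1, hTdef, hSdef, Tm, fromBlocks]
      | inr b =>
        obtain rfl : b = 0 := Subsingleton.elim b 0
        simp [e1, hTdef, hvcdef, hvdef, Tm, fromBlocks]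
    | inr b =>
      obtain rfl : b = 0 := Subsingleton.elim b 0
      cases b with
      | inl k =>
        simp only [submatrix_apply, fromBlocks_apply₂₁, conjTranspose_apply, of_apply,
          e1, finSumFinEquiv_apply_left, finSumFinEquiv_apply_right, hTdef, Tm, hvcdef, hvdef,
          Fin.coe_natAdd, Fin.coe_castAdd, Fin.val_eq_zero]
        rw [show (((N:ℕ) + 0 :ℕ):ℤ) - ((k:ℤ)) = -(((k:ℤ)) - (N:ℤ)) by push_cast; ring, hg]
        rfl
      | inr b2 =>
        obtain rfl : b2 = 0 := Subsingleton.elim b2 0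
        simp [e1, hTdef, hg0mdef, Tm, fromBlocks]
  have hFB : (fromBlocks S vc vcᴴ g0m).PosDef := hTb ▸ posDef_submatrix_equiv hT e1
  have hS : S.PosDef := by
    refine PosDef.of_dotProduct_mulVec_pos (Tm_herm hg N) fun x hx => ?_
    have hx' : (Sum.elim x (0 : Fin 1 → ℂ)) ≠ 0 := fun h => hx (funext fun i => congrFun h (Sum.inl i))
    have h2 := hFB.dotProduct_mulVec_pos hx'
    have heq : star (Sum.elim x (0 : Fin 1 → ℂ)) ⬝ᵥ (fromBlocks S vc vcᴴ g0m) *ᵥ Sum.elim x (0 : Fin 1 → ℂ)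
        = star x ⬝ᵥ S *ᵥ x := by
      simp [Function.star_sumElim, fromBlocks_mulVec, sumElim_dotProduct_sumElim]
    rwa [heq] at h2
  have hdetS : S.det ≠ 0 := hS.det_pos.ne'
  have hdetT : T.det ≠ 0 := hT.det_pos.ne'
  haveI : Invertible S := S.invertibleOfIsUnitDet (isUnit_iff_ne_zero.mpr hdetS)
  haveI : Invertible T := T.invertibleOfIsUnitDet (isUnit_iff_ne_zero.mpr hdetT)
  have hSchur1 : (g0m - vcᴴ * S⁻¹ * vc).PosSemidef :=
    (PosDef.fromBlocks₁₁ vc g0m hS).mp hFB.posSemidef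
  have hdet1 : (g0m - vcᴴ * S⁻¹ * vc).det ≠ 0 := by
    have h1 : (fromBlocks S vc vcᴴ g0m).det = S.det * (g0m - vcᴴ * S⁻¹ * vc).det := by
      rw [det_fromBlocks₁₁, invOf_eq_nonsing_inv]
    have h2 : (fromBlocks S vc vcᴴ g0m).det = T.det := by
      rw [← hTb, det_submatrix_equiv_self]
    intro h0
    exact hdetT (by rw [← h2, h1, h0, mul_zero])
  -- the construction
  set y : Fin N → ℂ := S⁻¹ *ᵥ v with hydef
  set z : Fin (N+1) → ℂ := Fin.cases 0 y with hzdef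
  set c : Fin (N+1) → ℂ := T *ᵥ z with hcdef
  have hSy : S *ᵥ y = v := by
    rw [hydef, Matrix.mulVec_mulVec, Matrix.mul_nonsing_inv _ (isUnit_iff_ne_zero.mpr hdetS),
      Matrix.one_mulVec]
  have hc : ∀ i : Fin N, c i.succ = g ((i:ℤ) - (N:ℤ)) := by
    intro i
    have h1 : c i.succ = ∑ k : Fin (N+1), g (((i:ℕ):ℤ) + 1 - (k:ℤ)) * z k := by
      simp [hcdef, hTdef, Tm, Matrix.mulVec, dotProduct]
    rw [h1, Fin.sum_univ_succ]
    simp only [hzdef, Fin.cases_zero, Fin.cases_succ, mul_zero, zero_add]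
    have h2 : ∀ k : Fin N, (((i:ℕ):ℤ) + 1 - ((k.succ : Fin (N+1)):ℤ)) = ((i:ℕ):ℤ) - (k:ℤ) := by
      intro k; simp [Fin.val_succ]
    calc ∑ k : Fin N, g (((i:ℕ):ℤ) + 1 - ((k.succ : Fin (N+1)):ℤ)) * y k
        = ∑ k : Fin N, S i k * y k := by
          refine Finset.sum_congr rfl fun k _ => ?_
          rw [h2 k]; simp [hSdef, Tm]
      _ = (S *ᵥ y) i := rfl
      _ = v i := by rw [hSy]
      _ = g ((i:ℤ) - (N:ℤ)) := rfl
  have hTinvc : T⁻¹ *ᵥ c = z := by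
    rw [hcdef, Matrix.mulVec_mulVec, Matrix.nonsing_inv_mul _ (isUnit_iff_ne_zero.mpr hdetT),
      Matrix.one_mulVec]
  set cc : Matrix (Fin (N+1)) (Fin 1) ℂ := Matrix.of (fun j _ => c j) with hccdef
  have hCC : ccᴴ * T⁻¹ * cc = vcᴴ * S⁻¹ * vc := by
    have hL : ∀ a b : Fin 1, (ccᴴ * T⁻¹ * cc) a b = star c ⬝ᵥ (T⁻¹ *ᵥ c) := by
      intro a b
      simp only [Matrix.mul_apply, conjTranspose_apply, hccdef, of_apply, dotProduct,
        Matrix.mulVec, Finset.sum_mul, Finset.mul_sum, Pi.star_apply]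
      rw [Finset.sum_comm]
      exact Finset.sum_congr rfl fun j _ => Finset.sum_congr rfl fun k _ => by ring
    have hR : ∀ a b : Fin 1, (vcᴴ * S⁻¹ * vc) a b = star v ⬝ᵥ (S⁻¹ *ᵥ v) := by
      intro a b
      simp only [Matrix.mul_apply, conjTranspose_apply, hvcdef, of_apply, dotProduct,
        Matrix.mulVec, Finset.sum_mul, Finset.mul_sum, Pi.star_apply]
      rw [Finset.sum_comm]
      exact Finset.sum_congr rfl fun j _ => Finset.sum_congr rfl fun k _ => by ring
    ext a b
    rw [hL a b, hR a b, hTinvc]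
    rw [show star v ⬝ᵥ (S⁻¹ *ᵥ v) = star v ⬝ᵥ y from by rw [hydef]]
    simp only [dotProduct, Pi.star_apply]
    rw [Fin.sum_univ_succ]
    simp only [hzdef, Fin.cases_zero, Fin.cases_succ, mul_zero, zero_add]
    refine Finset.sum_congr rfl fun i _ => ?_
    rw [hc i]
  have hSchur2 : (g0m - ccᴴ * T⁻¹ * cc).PosSemidef := by rw [hCC]; exact hSchur1
  have hdet2 : (g0m - ccᴴ * T⁻¹ * cc).det ≠ 0 := by rw [hCC]; exact hdet1
  refine ⟨starRingEnd ℂ (c 0), upd_sym hg (by omega) _, ?_⟩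
  set g' := upd g ((N:ℤ)+1) (starRingEnd ℂ (c 0)) with hg'def
  have hg'win : ∀ m : ℤ, m ≠ (N:ℤ)+1 → m ≠ -((N:ℤ)+1) → g' m = g m := fun m h1 h2 =>
    upd_eq h1 h2
  have hupd_at : g' ((N:ℤ)+1) = starRingEnd ℂ (c 0) := by
    rw [hg'def]; unfold upd; rw [if_pos rfl]
  have hupd_at' : g' (-((N:ℤ)+1)) = c 0 := by
    rw [hg'def]; unfold upd; rw [if_neg (by omega), if_pos rfl, Complex.conj_conj]
  let e2 : Fin (N+1) ⊕ Fin 1 ≃ Fin (N+2) := finSumFinEquiv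
  have hMb : (Tm g' (N+2)).submatrix e2 e2 = fromBlocks T cc ccᴴ g0m := by
    ext a b
    cases a with
    | inl j =>
      cases b with
      | inl k =>
        simp only [submatrix_apply, e2, finSumFinEquiv_apply_left, Tm, of_apply,
          fromBlocks_apply₁₁, Fin.coe_castAdd, hTdef]
        have hj : (j:ℕ) < N+1 := j.isLt
        have hk : (k:ℕ) < N+1 := k.isLt
        rw [hg'win _ (by omega) (by omega)]
      | inr b =>
        obtain rfl : b = 0 := Subsingleton.elim b 0
        simp only [submatrix_apply, e2, finSumFinEquiv_apply_left, finSumFinEquiv_apply_right,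
          Tm, of_apply, fromBlocks_apply₁₂, hccdef, Fin.coe_castAdd, Fin.coe_natAdd,
          Fin.val_eq_zero]
        induction j using Fin.cases with
        | zero =>
          rw [show (((0 : Fin (N+1)):ℕ):ℤ) - (((N + 1 + 0 :ℕ)):ℤ) = -((N:ℤ)+1) from by
            push_cast [Fin.val_succ, Fin.val_zero]; try omega]
          exact hupd_at'
        | succ i =>
          have hi : (i:ℕ) < N := i.isLt
          rw [show (((i.succ : Fin (N+1)):ℕ):ℤ) - (((N + 1 + 0 :ℕ)):ℤ) = ((i:ℕ):ℤ) - (N:ℤ) from by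
            push_cast [Fin.val_succ, Fin.val_zero]; try omega]
          rw [hg'win _ (by omega) (by omega)]
          exact (hc i).symm
    | inr a2 =>
      obtain rfl : a2 = 0 := Subsingleton.elim a2 0
      cases b with
      | inl k =>
        simp only [submatrix_apply, e2, finSumFinEquiv_apply_left, finSumFinEquiv_apply_right,
          Tm, of_apply, fromBlocks_apply₂₁, conjTranspose_apply, hccdef, Fin.coe_castAdd,
          Fin.coe_natAdd, Fin.val_eq_zero]
        induction k using Fin.cases with
        | zero =>
          rw [show (((N + 1 + 0 :ℕ)):ℤ) - (((0 : Fin (N+1)):ℕ):ℤ) = ((N:ℤ)+1) from by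
            push_cast [Fin.val_succ, Fin.val_zero]; try omega]
          rw [hupd_at]
          rfl
        | succ i =>
          have hi : (i:ℕ) < N := i.isLt
          rw [show (((N + 1 + 0 :ℕ)):ℤ) - (((i.succ : Fin (N+1)):ℕ):ℤ) = -(((i:ℕ):ℤ) - (N:ℤ)) from by
            push_cast [Fin.val_succ, Fin.val_zero]; try omega]
          rw [hg'win _ (by omega) (by omega), hg, hc i]
          rfl
      | inr b2 =>
        obtain rfl : b2 = 0 := Subsingleton.elim b2 0
        simp only [submatrix_apply, e2, finSumFinEquiv_apply_right, Tm, of_apply,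
          fromBlocks_apply₂₂, hg0mdef, Fin.coe_natAdd, Fin.val_eq_zero]
        rw [show (((N + 1 + 0:ℕ)):ℤ) - (((N + 1 + 0:ℕ)):ℤ) = (0:ℤ) from by ring]
        rw [hg'win _ (by omega) (by omega)]
  have hFB2 : (fromBlocks T cc ccᴴ g0m).PosSemidef :=
    (PosDef.fromBlocks₁₁ cc g0m hT).mpr hSchur2
  have hdetFB2 : (fromBlocks T cc ccᴴ g0m).det ≠ 0 := by
    rw [det_fromBlocks₁₁, invOf_eq_nonsing_inv]
    exact mul_ne_zero hdetT hdet2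
  have hFB2' : (fromBlocks T cc ccᴴ g0m).PosDef :=
    posDef_of_posSemidef_det_ne_zero hFB2 hdetFB2
  have hfinal : Tm g' (N+2) = (fromBlocks T cc ccᴴ g0m).submatrix e2.symm e2.symm := by
    rw [← hMb]
    simp [Matrix.submatrix_submatrix]
  show (Tm g' (N+2)).PosDef
  rw [hfinal]
  exact posDef_submatrix_equiv hFB2' e2.symm

def tower (n : ℕ) (g0 : ℤ → ℂ) (h0s : Sym g0) (h0p : (Tm g0 (n+1)).PosDef) :
    (k : ℕ) → {h : ℤ → ℂ // Sym h ∧ (Tm h (n+k+1)).PosDef}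
  | 0 => ⟨g0, h0s, h0p⟩
  | (k+1) =>
    let p := tower n g0 h0s h0p k
    let hx := step p.1 (n+k) p.2.1 p.2.2
    ⟨upd p.1 (((n+k : ℕ):ℤ)+1) (Classical.choose hx),
     (Classical.choose_spec hx).1,
     (Classical.choose_spec hx).2⟩

lemma tower_succ_agree (n : ℕ) (g0 : ℤ → ℂ) (h0s : Sym g0) (h0p : (Tm g0 (n+1)).PosDef)
    (k : ℕ) {m : ℤ} (hm : m.natAbs ≤ n + k) :
    (tower n g0 h0s h0p (k+1)).1 m = (tower n g0 h0s h0p k).1 m := by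
  show upd _ _ _ m = _
  exact upd_eq (by omega) (by omega)

lemma tower_agree (n : ℕ) (g0 : ℤ → ℂ) (h0s : Sym g0) (h0p : (Tm g0 (n+1)).PosDef)
    {k1 k2 : ℕ} (h : k1 ≤ k2) {m : ℤ} (hm : m.natAbs ≤ n + k1) :
    (tower n g0 h0s h0p k2).1 m = (tower n g0 h0s h0p k1).1 m := by
  induction k2, h using Nat.le_induction with
  | base => rfl
  | succ k2 hk ih =>
    rw [tower_succ_agree n g0 h0s h0p k2 (le_trans hm (by omega)), ih]

def limitF (n : ℕ) (g0 : ℤ → ℂ) (h0s : Sym g0) (h0p : (Tm g0 (n+1)).PosDef) : ℤ → ℂ :=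
  fun m => (tower n g0 h0s h0p m.natAbs).1 m

lemma limitF_eq (n : ℕ) (g0 : ℤ → ℂ) (h0s : Sym g0) (h0p : (Tm g0 (n+1)).PosDef)
    (K : ℕ) {m : ℤ} (hK : m.natAbs ≤ K) :
    limitF n g0 h0s h0p m = (tower n g0 h0s h0p K).1 m := by
  unfold limitF
  rw [tower_agree n g0 h0s h0p hK (by omega), tower_agree n g0 h0s h0p (le_refl m.natAbs) (by omega)]

lemma limitF_window (n : ℕ) (g0 : ℤ → ℂ) (h0s : Sym g0) (h0p : (Tm g0 (n+1)).PosDef)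
    {m : ℤ} (hm : m.natAbs ≤ n) :
    limitF n g0 h0s h0p m = g0 m := by
  unfold limitF
  rw [tower_agree n g0 h0s h0p (Nat.zero_le _) (by omega)]
  rfl

lemma limitF_psd (n : ℕ) (g0 : ℤ → ℂ) (h0s : Sym g0) (h0p : (Tm g0 (n+1)).PosDef)
    (N : ℕ) : (Tm (limitF n g0 h0s h0p) (N+1)).PosSemidef := by
  have hmat : Tm (limitF n g0 h0s h0p) (N+1) =
      (Tm (tower n g0 h0s h0p N).1 (n+N+1)).submatrix
        (Fin.castLE (by omega)) (Fin.castLE (by omega)) := by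
    ext j k
    have hj : (j:ℕ) < N+1 := j.isLt
    have hk : (k:ℕ) < N+1 := k.isLt
    simp only [Tm, of_apply, Matrix.submatrix_apply, Fin.coe_castLE]
    rw [limitF_eq n g0 h0s h0p N (by omega)]
  rw [hmat]
  exact ((tower n g0 h0s h0p N).2.2.posSemidef).submatrix _

def baseF (n : ℕ) (f : ℤ → ℂ) (ε : ℝ) : ℤ → ℂ := fun m =>
  (if m.natAbs ≤ n then (if 0 ≤ m then f m else starRingEnd ℂ (f (-m))) else 0) +
  (if m = 0 then (ε:ℂ) else 0)

variable {n : ℕ} {f : ℤ → ℂ}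

lemma baseF_sym (hsym : ∀ m : ℤ, |m| ≤ n → f (-m) = starRingEnd ℂ (f m)) (ε : ℝ) :
    Sym (baseF n f ε) := by
  have hf0 : f 0 = starRingEnd ℂ (f 0) := by simpa using hsym 0 (by simp)
  intro m
  unfold baseF
  rw [map_add]
  congr 1
  · by_cases hn : m.natAbs ≤ n
    · rw [if_pos (by omega : (-m).natAbs ≤ n), if_pos hn]
      rcases lt_trichotomy m 0 with hm | rfl | hm
      · rw [if_pos (by omega), if_neg (by omega), Complex.conj_conj]
      · simp [← hf0]
      · rw [if_neg (by omega), if_pos (by omega)]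
        simp
    · rw [if_neg (by omega), if_neg hn]; simp
  · rcases eq_or_ne m 0 with rfl | h0
    · simp
    · rw [if_neg (by omega), if_neg h0]; simp

lemma baseF_pd (hsym : ∀ m : ℤ, |m| ≤ n → f (-m) = starRingEnd ℂ (f m))
    (hpsd : (Matrix.of fun j k : Fin (n + 1) => f ((j : ℤ) - (k : ℤ))).PosSemidef)
    {ε : ℝ} (hε : 0 < ε) : (Tm (baseF n f ε) (n+1)).PosDef := by
  have habs : ∀ m : ℤ, m.natAbs ≤ n → |m| ≤ (n:ℤ) := fun m hm => by
    rw [Int.abs_eq_natAbs]; exact_mod_cast hm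
  have hmat : Tm (baseF n f ε) (n+1) =
      (Matrix.of fun j k : Fin (n + 1) => f ((j : ℤ) - (k : ℤ))) +
        Matrix.diagonal (fun _ : Fin (n+1) => (ε:ℂ)) := by
    ext j k
    have hj : (j:ℕ) < n+1 := j.isLt
    have hk : (k:ℕ) < n+1 := k.isLt
    simp only [Tm, of_apply, Matrix.add_apply, diagonal_apply]
    unfold baseF
    rcases eq_or_ne j k with rfl | hjk
    · simp
    · have hne : (j:ℤ) - (k:ℤ) ≠ 0 := fun hcon => hjk (Fin.ext (by omega))
      rw [if_neg hne, add_zero, if_pos (by omega : ((j:ℤ)-(k:ℤ)).natAbs ≤ n), if_neg hjk,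
        add_zero]
      rcases le_or_gt 0 ((j:ℤ)-(k:ℤ)) with hd | hd
      · rw [if_pos hd]
      · rw [if_neg (not_le.mpr hd)]
        have h2 := hsym (-((j:ℤ)-(k:ℤ))) (by rw [abs_neg]; exact habs _ (by omega))
        rw [neg_neg] at h2
        exact h2.symm
  rw [hmat]
  exact Matrix.PosDef.posSemidef_add hpsd (Matrix.PosDef.diagonal (fun _ => by
    simpa using hε))

lemma entry_bound {h : ℤ → ℂ} (hsym : Sym h) (hpsd : ∀ N, (Tm h (N+1)).PosSemidef) (m : ℤ) :
    ‖h m‖ ≤ (h 0).re := by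
  have h0 : (0:ℂ) ≤ h 0 := by
    have h1 := (hpsd 0).dotProduct_mulVec_nonneg (fun _ => 1)
    simpa [Tm, dotProduct, mulVec, Fin.sum_univ_one] using h1
  have h0re : 0 ≤ (h 0).re ∧ (h 0).im = 0 := by
    rw [Complex.le_def] at h0; simpa using ⟨h0.1, h0.2.symm⟩
  have key : ∀ k : ℕ, ‖h (k:ℤ)‖ ≤ (h 0).re := by
    intro k
    rcases Nat.eq_zero_or_pos k with rfl | hk
    · have : h ((0:ℕ):ℤ) = ((h 0).re : ℂ) := by
        apply Complex.ext <;> simp [h0re.2]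
      rw [this, Complex.norm_real, Real.norm_eq_abs, _root_.abs_of_nonneg h0re.1]
    · by_cases hz : h (k:ℤ) = 0
      · rw [hz]; simpa using h0re.1
      · set w := h (k:ℤ) with hw
        set r : ℝ := ‖w‖ with hr
        have hrpos : 0 < r := norm_pos_iff.mpr hz
        set b : ℂ := -w / r with hb
        have hB := ((hpsd k).submatrix ![(0 : Fin (k+1)), ⟨k, by omega⟩])
        have hform := hB.dotProduct_mulVec_nonneg ![1, b]
        have hentry : ∀ a c : Fin 2,
            ((Tm h (k+1)).submatrix ![(0 : Fin (k+1)), ⟨k, by omega⟩]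
              ![(0 : Fin (k+1)), ⟨k, by omega⟩]) a c
            = h ((((![(0 : Fin (k+1)), ⟨k, by omega⟩]) a : Fin (k+1)) : ℤ)
                - (((![(0 : Fin (k+1)), ⟨k, by omega⟩]) c : Fin (k+1)) : ℤ)) := by
          intro a c; simp [Tm]
        have hcompute : star ![1, b] ⬝ᵥ
            ((Tm h (k+1)).submatrix ![(0 : Fin (k+1)), ⟨k, by omega⟩]
              ![(0 : Fin (k+1)), ⟨k, by omega⟩]) *ᵥ ![1, b]
            = h 0 + h (-(k:ℤ)) * b + starRingEnd ℂ b * h (k:ℤ)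
              + starRingEnd ℂ b * h 0 * b := by
          simp [Tm, dotProduct, mulVec, Fin.sum_univ_two, Matrix.submatrix_apply]
          ring
        rw [hcompute] at hform
        have hsymk : h (-(k:ℤ)) = starRingEnd ℂ w := hsym (k:ℤ)
        have hbb : starRingEnd ℂ b * b = 1 := by
          rw [hb]
          rw [map_div₀, map_neg]
          rw [show (starRingEnd ℂ) ((r:ℂ)) = (r:ℂ) from Complex.conj_ofReal r]
          field_simp
          rw [← Complex.normSq_eq_conj_mul_self]
          rw [show ((r:ℂ))^2 = ((r^2 : ℝ) : ℂ) from by push_cast; ring]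
          rw [hr, Complex.sq_norm]
        have hwb : starRingEnd ℂ w * b = -(r:ℂ) := by
          rw [hb]
          field_simp
          rw [← Complex.normSq_eq_conj_mul_self, show ((r:ℂ))^2 = ((r^2 : ℝ) : ℂ) from by
            push_cast; ring, hr, Complex.sq_norm]
        have hbw : starRingEnd ℂ b * w = -(r:ℂ) := by
          have : starRingEnd ℂ (starRingEnd ℂ b * w) = starRingEnd ℂ w * b := by
            rw [_root_.map_mul, Complex.conj_conj, mul_comm]
          have h2 := congrArg (starRingEnd ℂ) this
          rw [Complex.conj_conj, hwb] at h2
          rw [h2, map_neg, Complex.conj_ofReal]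
        have hE : h 0 + h (-(k:ℤ)) * b + starRingEnd ℂ b * h (k:ℤ)
              + starRingEnd ℂ b * h 0 * b = 2 * h 0 - 2 * (r:ℂ) := by
          rw [hsymk, ← hw, hwb, show starRingEnd ℂ b * h 0 * b = h 0 * (starRingEnd ℂ b * b) from
            by ring, hbb, hbw]
          ring
        rw [hE, Complex.le_def] at hform
        have h3 := hform.1
        have h4 : (2 * h 0 - 2 * (r:ℂ)).re = 2 * (h 0).re - 2 * r := by simp
        rw [h4] at h3
        simp only [Complex.zero_re] at h3
        show r ≤ (h 0).re
        linarith
  rcases le_or_gt 0 m with hm | hm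
  · have : m = (m.natAbs : ℤ) := by omega
    rw [this]; exact key m.natAbs
  · have h1 : m = -((m.natAbs : ℤ)) := by omega
    rw [h1, hsym, Complex.norm_conj]
    exact key m.natAbs


lemma baseF_window {n : ℕ} {f : ℤ → ℂ}
    (hsym : ∀ m : ℤ, |m| ≤ n → f (-m) = starRingEnd ℂ (f m)) (ε : ℝ)
    {m : ℤ} (hm : m.natAbs ≤ n) :
    baseF n f ε m = f m + (if m = 0 then (ε:ℂ) else 0) := by
  have habs : ∀ m' : ℤ, m'.natAbs ≤ n → |m'| ≤ (n:ℤ) := fun m' hm' => by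
    rw [Int.abs_eq_natAbs]; exact_mod_cast hm'
  unfold baseF
  rw [if_pos hm]
  congr 1
  rcases le_or_gt 0 m with h | h
  · rw [if_pos h]
  · rw [if_neg (not_le.mpr h)]
    have h2 := hsym (-m) (by rw [abs_neg]; exact habs m hm)
    rw [neg_neg] at h2
    exact h2.symm

lemma limitF_sym (n : ℕ) (g0 : ℤ → ℂ) (h0s : Sym g0) (h0p : (Tm g0 (n+1)).PosDef) :
    Sym (limitF n g0 h0s h0p) := by
  intro m
  unfold limitF
  rw [Int.natAbs_neg]
  exact (tower n g0 h0s h0p m.natAbs).2.1 m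

lemma psd_closed (N : ℕ) : IsClosed {h : ℤ → ℂ | (Tm h (N+1)).PosSemidef} := by
  have hset : {h : ℤ → ℂ | (Tm h (N+1)).PosSemidef} =
      (⋂ (j : Fin (N+1)) (k : Fin (N+1)),
        {h : ℤ → ℂ | starRingEnd ℂ (h ((k:ℤ)-(j:ℤ))) = h ((j:ℤ)-(k:ℤ))}) ∩
      (⋂ x : Fin (N+1) → ℂ, {h : ℤ → ℂ | 0 ≤ star x ⬝ᵥ (Tm h (N+1)) *ᵥ x}) := by
    ext h
    simp only [Set.mem_inter_iff, Set.mem_iInter, Set.mem_setOf_eq]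
    constructor
    · intro hp
      refine ⟨fun j k => ?_, hp.dotProduct_mulVec_nonneg⟩
      have := congrFun (congrFun hp.1 j) k
      simpa [Tm, conjTranspose_apply] using this
    · rintro ⟨h1, h2⟩
      refine PosSemidef.of_dotProduct_mulVec_nonneg ?_ h2
      ext j k
      simpa [Tm, conjTranspose_apply] using h1 j k
  rw [hset]
  apply IsClosed.inter
  · refine isClosed_iInter fun j => isClosed_iInter fun k => ?_
    exact isClosed_eq (Complex.continuous_conj.comp (continuous_apply _)) (continuous_apply _)
  · refine isClosed_iInter fun x => ?_
    have hc : Continuous fun h : ℤ → ℂ => star x ⬝ᵥ (Tm h (N+1)) *ᵥ x := by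
      simp only [dotProduct, mulVec, Tm, of_apply]
      refine continuous_finset_sum _ fun i _ => Continuous.mul continuous_const ?_
      refine continuous_finset_sum _ fun j _ => Continuous.mul ?_ continuous_const
      exact continuous_apply _
    have h0 : IsClosed {z : ℂ | 0 ≤ z} := by
      have : {z : ℂ | 0 ≤ z} = Complex.re ⁻¹' (Set.Ici 0) ∩ Complex.im ⁻¹' {0} := by
        ext z
        simp only [Set.mem_setOf_eq, Complex.le_def, Set.mem_inter_iff, Set.mem_preimage,
          Set.mem_Ici, Set.mem_singleton_iff, Complex.zero_re, Complex.zero_im]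
        exact ⟨fun hz => ⟨hz.1, hz.2.symm⟩, fun hz => ⟨hz.1, hz.2.symm⟩⟩
      rw [this]
      exact (isClosed_Ici.preimage Complex.continuous_re).inter
        (isClosed_singleton.preimage Complex.continuous_im)
    exact h0.preimage hc

end PDExt

open Matrix ComplexOrder

theorem posdef_extension_from_window (n : ℕ) (f : ℤ → ℂ)
    (hsym : ∀ m : ℤ, |m| ≤ n → f (-m) = starRingEnd ℂ (f m))
    (hpsd : (Matrix.of fun j k : Fin (n + 1) => f ((j : ℤ) - (k : ℤ))).PosSemidef) :
    ∃ g : ℤ → ℂ,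
      (∀ m : ℤ, |m| ≤ n → g m = f m) ∧
      (∀ N : ℕ,
        (Matrix.of fun j k : Fin (N + 1) => g ((j : ℤ) - (k : ℤ))).PosSemidef) := by
  classical
  open PDExt in
  have hεpos : ∀ j : ℕ, (0:ℝ) < 1/(j+1:ℝ) := fun j => by positivity
  let gseq : ℕ → ℤ → ℂ := fun j =>
    limitF n (baseF n f (1/(j+1:ℝ))) (baseF_sym hsym _) (baseF_pd hsym hpsd (hεpos j))
  have hgseq_sym : ∀ j, Sym (gseq j) := fun j => limitF_sym _ _ _ _
  have hgseq_psd : ∀ j N, (Tm (gseq j) (N+1)).PosSemidef := fun j N => limitF_psd _ _ _ _ N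
  have hgseq_win : ∀ j, ∀ m : ℤ, m.natAbs ≤ n →
      gseq j m = f m + (if m = 0 then ((1/(j+1:ℝ) : ℝ):ℂ) else 0) := fun j m hm => by
    show limitF _ _ _ _ m = _
    rw [limitF_window _ _ _ _ hm, baseF_window hsym _ hm]
  have hgseq0 : ∀ j, gseq j 0 = f 0 + ((1/(j+1:ℝ) : ℝ):ℂ) := fun j => by
    simpa using hgseq_win j 0 (by simp)
  set R : ℝ := (f 0).re + 1 with hR
  have hbound : ∀ j m, ‖gseq j m‖ ≤ R := by
    intro j m
    have h1 := entry_bound (hgseq_sym j) (hgseq_psd j) m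
    have h2 : (gseq j 0).re = (f 0).re + 1/(j+1:ℝ) := by rw [hgseq0]; simp only [Complex.add_re, Complex.ofReal_re]
    have h3 : 1/(j+1:ℝ) ≤ 1 := by
      rw [div_le_one (by positivity)]
      have : (0:ℝ) ≤ (j:ℝ) := Nat.cast_nonneg j
      linarith
    rw [h2] at h1
    rw [hR]
    linarith
  set K : Set (ℤ → ℂ) := Set.univ.pi (fun _ : ℤ => Metric.closedBall (0:ℂ) R) with hK
  have hKc : IsCompact K := isCompact_univ_pi fun _ => isCompact_closedBall _ _
  have hmemK : ∀ j, gseq j ∈ K := fun j => Set.mem_univ_pi.mpr fun m => by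
    simpa [Metric.mem_closedBall, Complex.dist_eq] using hbound j m
  have hle : Filter.map gseq Filter.atTop ≤ Filter.principal K :=
    Filter.le_principal_iff.mpr (Filter.mem_map.mpr (Filter.Eventually.of_forall hmemK))
  obtain ⟨g, hgK, hcl⟩ := hKc.exists_clusterPt hle
  have hclosedsets : ∀ S : Set (ℤ → ℂ), IsClosed S → (∀ j, gseq j ∈ S) → g ∈ S := by
    intro S hS hall
    have h1 : S ∈ Filter.map gseq Filter.atTop :=
      Filter.mem_map.mpr (Filter.Eventually.of_forall hall)
    have h2 : ClusterPt g (Filter.principal S) := hcl.mono (Filter.le_principal_iff.mpr h1)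
    rw [← hS.closure_eq]
    exact mem_closure_iff_clusterPt.mpr h2
  refine ⟨g, ?_, ?_⟩
  · intro m hm
    have hmn : m.natAbs ≤ n := by
      rw [Int.abs_eq_natAbs] at hm; exact_mod_cast hm
    rcases eq_or_ne m 0 with rfl | hm0
    · have htend2 : Filter.Tendsto (fun j : ℕ => ((1/(j+1:ℝ) : ℝ):ℂ)) Filter.atTop (nhds 0) := by
        rw [show ((0:ℂ)) = ((0:ℝ):ℂ) from by simp]
        exact (Complex.continuous_ofReal.tendsto 0).comp tendsto_one_div_add_atTop_nhds_zero_nat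
      have htend : Filter.Tendsto (fun j : ℕ => gseq j 0) Filter.atTop (nhds (f 0)) := by
        have heq : (fun j : ℕ => gseq j 0) = fun j : ℕ => f 0 + ((1/(j+1:ℝ) : ℝ):ℂ) :=
          funext fun j => hgseq0 j
        rw [heq]
        simpa using tendsto_const_nhds.add htend2
      have hclpt : ClusterPt (g 0) (Filter.map (fun j : ℕ => gseq j 0) Filter.atTop) := by
        have := hcl.map (continuous_apply (0:ℤ)).continuousAt Filter.tendsto_map
        simpa [Filter.map_map, Function.comp_def] using this
      exact eq_of_nhds_neBot (hclpt.mono htend)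
    · refine hclosedsets {h : ℤ → ℂ | h m = f m}
        (isClosed_eq (continuous_apply m) continuous_const) fun j => ?_
      show gseq j m = f m
      rw [hgseq_win j m hmn, if_neg hm0, add_zero]
  · intro N
    exact hclosedsets {h : ℤ → ℂ | (Tm h (N+1)).PosSemidef} (psd_closed N)
      (fun j => hgseq_psd j N)
end
end

section
/- Let A be a Hermitian matrix with spectral decomposition A = Σ_i λ_i v_i v_iᴴ. Then the matrix A₊ := Σ_{i : λ_i ≥ 0} λ_i v_i v_iᴴ is positive semidefinite and minimizes the Frobenius distance ‖A − X‖_F over all positive semidefinite Hermitian matrices X. -/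
open Matrix ComplexOrder Finset

lemma frob_trace {n : ℕ} (M : Matrix (Fin n) (Fin n) ℂ) :
    ∑ j : Fin n, ∑ k : Fin n, ‖M j k‖ ^ 2 = (Matrix.trace (Mᴴ * M)).re := by
  rw [Matrix.trace, Complex.re_sum]
  rw [Finset.sum_comm]
  refine Finset.sum_congr rfl fun k _ => ?_
  rw [Matrix.diag, Matrix.mul_apply, Complex.re_sum]
  refine Finset.sum_congr rfl fun j _ => ?_
  simp [Matrix.conjTranspose_apply, RCLike.star_def, ← Complex.normSq_eq_conj_mul_self,
    Complex.sq_norm]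

lemma frob_conj {n : ℕ} (U M : Matrix (Fin n) (Fin n) ℂ)
    (hUU : Uᴴ * U = 1) :
    ∑ j : Fin n, ∑ k : Fin n, ‖(U * M * Uᴴ) j k‖ ^ 2
      = ∑ j : Fin n, ∑ k : Fin n, ‖M j k‖ ^ 2 := by
  rw [frob_trace, frob_trace]
  congr 1
  have h1 : (U * M * Uᴴ)ᴴ * (U * M * Uᴴ) = U * (Mᴴ * M) * Uᴴ := by
    simp only [Matrix.conjTranspose_mul, Matrix.conjTranspose_conjTranspose, Matrix.mul_assoc]
    rw [← Matrix.mul_assoc Uᴴ U, hUU, Matrix.one_mul]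
  rw [h1, Matrix.trace_mul_comm (U * (Mᴴ * M)) Uᴴ, ← Matrix.mul_assoc, hUU, Matrix.one_mul]

theorem psd_projection_minimizes_frobenius {n : ℕ}
    (A : Matrix (Fin n) (Fin n) ℂ) (hA : A.IsHermitian)
    (lam : Fin n → ℝ) (v : Fin n → (Fin n → ℂ))
    (horth : ∀ i j, star (v i) ⬝ᵥ v j = if i = j then (1 : ℂ) else 0)
    (hdecomp : A = ∑ i : Fin n, (lam i : ℂ) • Matrix.vecMulVec (v i) (star (v i)))
    (Aplus : Matrix (Fin n) (Fin n) ℂ)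
    (hAplus : Aplus = ∑ i ∈ Finset.univ.filter (fun i => 0 ≤ lam i),
        (lam i : ℂ) • Matrix.vecMulVec (v i) (star (v i))) :
    Aplus.PosSemidef ∧
    ∀ X : Matrix (Fin n) (Fin n) ℂ, X.PosSemidef →
      Real.sqrt (∑ j : Fin n, ∑ k : Fin n, ‖(A - Aplus) j k‖ ^ 2) ≤
      Real.sqrt (∑ j : Fin n, ∑ k : Fin n, ‖(A - X) j k‖ ^ 2) := by
  classical
  set U : Matrix (Fin n) (Fin n) ℂ := Matrix.of (fun j i => v i j) with hUdef
  have hUU : Uᴴ * U = 1 := by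
    ext i j
    have := horth i j
    simpa [Matrix.mul_apply, Matrix.conjTranspose_apply, dotProduct, Matrix.one_apply,
      hUdef] using this
  have hUUt : U * Uᴴ = 1 := mul_eq_one_comm.mp hUU
  have hdiag : ∀ c : Fin n → ℂ,
      (∑ i : Fin n, c i • Matrix.vecMulVec (v i) (star (v i))) = U * Matrix.diagonal c * Uᴴ := by
    intro c
    ext j k
    rw [Matrix.sum_apply]
    rw [Matrix.mul_apply]
    refine Finset.sum_congr rfl fun m _ => ?_
    simp [Matrix.mul_diagonal, Matrix.vecMulVec_apply, Matrix.conjTranspose_apply, hUdef]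
    ring
  set cplus : Fin n → ℂ := fun i => if 0 ≤ lam i then (lam i : ℂ) else 0 with hcplus
  have hAplus' : Aplus = U * Matrix.diagonal cplus * Uᴴ := by
    rw [hAplus, Finset.sum_filter, ← hdiag]
    refine Finset.sum_congr rfl fun i _ => ?_
    by_cases h : 0 ≤ lam i <;> simp [hcplus, h]
  have hcplus_nonneg : ∀ i, (0 : ℂ) ≤ cplus i := by
    intro i
    by_cases h : 0 ≤ lam i <;> simp [hcplus, h]
  have hpsd : Aplus.PosSemidef := by
    rw [hAplus']
    exact (Matrix.posSemidef_diagonal_iff.mpr hcplus_nonneg).mul_mul_conjTranspose_same U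
  refine ⟨hpsd, fun X hX => ?_⟩
  set lamC : Fin n → ℂ := fun i => (lam i : ℂ) with hlamC
  have hAdiag : A = U * Matrix.diagonal lamC * Uᴴ := by rw [hdecomp, ← hdiag]
  set cneg : Fin n → ℂ := fun i => if 0 ≤ lam i then 0 else (lam i : ℂ) with hcneg
  have hAmAplus : A - Aplus = U * Matrix.diagonal cneg * Uᴴ := by
    have hd : Matrix.diagonal lamC - Matrix.diagonal cplus = Matrix.diagonal cneg := by
      rw [Matrix.diagonal_sub]
      refine congrArg Matrix.diagonal ?_
      funext i
      by_cases h : 0 ≤ lam i <;> simp [hcneg, hcplus, hlamC, h]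
    rw [hAdiag, hAplus', ← Matrix.sub_mul, ← Matrix.mul_sub, hd]
  set Y : Matrix (Fin n) (Fin n) ℂ := Uᴴ * X * U with hYdef
  have hY : Y.PosSemidef := hX.conjTranspose_mul_mul_same U
  have hXeq : X = U * Y * Uᴴ := by
    rw [hYdef]
    simp only [Matrix.mul_assoc]
    rw [hUUt, Matrix.mul_one, ← Matrix.mul_assoc, hUUt, Matrix.one_mul]
  have hAmX : A - X = U * (Matrix.diagonal lamC - Y) * Uᴴ := by
    rw [hAdiag, hXeq, ← Matrix.sub_mul, ← Matrix.mul_sub]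
  -- diagonal entries of Y are real and nonnegative
  have hYdiag : ∀ j, 0 ≤ (Y j j).re ∧ (Y j j).im = 0 := by
    intro j
    have h := hY.dotProduct_mulVec_nonneg (Pi.single j 1)
    have h2 : star (Pi.single j 1 : Fin n → ℂ) ⬝ᵥ Y *ᵥ Pi.single j 1 = Y j j := by
      simp [Matrix.mulVec_single, dotProduct, Pi.single_apply, apply_ite (star : ℂ → ℂ),
        Finset.sum_ite_eq']
    rw [h2] at h
    obtain ⟨h1', h2'⟩ := Complex.nonneg_iff.mp h
    exact ⟨h1', h2'.symm⟩
  -- compute both Frobenius sums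
  rw [hAmAplus, hAmX, frob_conj _ _ hUU, frob_conj _ _ hUU]
  apply Real.sqrt_le_sqrt
  have hL : ∑ j : Fin n, ∑ k : Fin n, ‖Matrix.diagonal cneg j k‖ ^ 2
      = ∑ j : Fin n, ‖cneg j‖ ^ 2 := by
    refine Finset.sum_congr rfl fun j _ => ?_
    rw [Finset.sum_eq_single j]
    · simp [Matrix.diagonal_apply_eq]
    · intro k _ hk
      simp [Matrix.diagonal_apply_ne _ (Ne.symm hk)]
    · simp
  rw [hL]
  calc ∑ j : Fin n, ‖cneg j‖ ^ 2
      ≤ ∑ j : Fin n, ‖(Matrix.diagonal lamC - Y) j j‖ ^ 2 := by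
        refine Finset.sum_le_sum fun j _ => ?_
        have hjj : (Matrix.diagonal lamC - Y) j j = (lam j : ℂ) - Y j j := by
          simp [Matrix.sub_apply, Matrix.diagonal_apply_eq, hlamC]
        rw [hjj]
        have habs : ‖(lam j : ℂ) - Y j j‖ ^ 2
            = (lam j - (Y j j).re) ^ 2 + (Y j j).im ^ 2 := by
          rw [Complex.sq_norm, Complex.normSq_apply]
          simp [Complex.sub_re, Complex.sub_im]
          ring
        rw [habs, (hYdiag j).2]
        obtain ⟨hre, _⟩ := hYdiag j
        by_cases h : 0 ≤ lam j
        · simp [hcneg, h]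
          positivity
        · have habs2 : ‖cneg j‖ ^ 2 = lam j ^ 2 := by
            simp [hcneg, h, Complex.norm_real, sq_abs]
          rw [habs2]
          push_neg at h
          nlinarith
    _ ≤ ∑ j : Fin n, ∑ k : Fin n, ‖(Matrix.diagonal lamC - Y) j k‖ ^ 2 := by
        refine Finset.sum_le_sum fun j _ => ?_
        exact Finset.single_le_sum
          (f := fun k => ‖(Matrix.diagonal lamC - Y) j k‖ ^ 2)
          (fun k _ => by positivity) (Finset.mem_univ j)
end

section
/- Let H be Hermitian with ρ = e^{−βH}/Tr(e^{−βH}) for β > 0, and let c be any n×n complex matrix. Define G(t) = Tr(ρ e^{iHt} c e^{−iHt} cᴴ). Then G(0) is real and G(0) ≥ |G(t)| for all t ∈ ℝ. -/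
open Matrix

local notation "cexp" => Complex.exp

private lemma exp_smul_herm (n : ℕ) (H : Matrix (Fin n) (Fin n) ℂ) (hH : H.IsHermitian) (s : ℂ) :
    NormedSpace.exp (s • H) = (hH.eigenvectorUnitary : Matrix (Fin n) (Fin n) ℂ) *
      diagonal (fun i => Complex.exp (s * hH.eigenvalues i)) *
      star (hH.eigenvectorUnitary : Matrix (Fin n) (Fin n) ℂ) := by
  set U : Matrix (Fin n) (Fin n) ℂ := (hH.eigenvectorUnitary : Matrix (Fin n) (Fin n) ℂ) with hUdef
  have hmul : U * star U = 1 := mem_unitaryGroup_iff.mp hH.eigenvectorUnitary.2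
  have hmul' : star U * U = 1 := mem_unitaryGroup_iff'.mp hH.eigenvectorUnitary.2
  have hinv : U⁻¹ = star U := Matrix.inv_eq_right_inv hmul
  have hU : IsUnit U := ⟨⟨U, star U, hmul, hmul'⟩, rfl⟩
  have hd : (diagonal fun i : Fin n => s * (hH.eigenvalues i : ℂ))
      = s • diagonal (RCLike.ofReal ∘ hH.eigenvalues) := by
    ext i j
    by_cases h : i = j <;> simp [diagonal_apply, h]
  have h1 : s • H = U * (diagonal fun i : Fin n => s * (hH.eigenvalues i : ℂ)) * U⁻¹ := by
    rw [hinv]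
    conv_lhs => rw [hH.spectral_theorem]
    rw [hd, mul_smul_comm, smul_mul_assoc, Unitary.conjStarAlgAut_apply]
  rw [h1, Matrix.exp_conj U _ hU, Matrix.exp_diagonal, hinv]
  congr 2
  funext i
  simp [Pi.exp_def, Complex.exp_eq_exp_ℂ]

private lemma trace_diag_sand (n : ℕ) (d e : Fin n → ℂ) (b : Matrix (Fin n) (Fin n) ℂ) :
    (diagonal d * b * diagonal e * bᴴ).trace
      = ∑ j, ∑ k, d j * e k * (b j k * (starRingEnd ℂ) (b j k)) := by
  simp only [Matrix.trace, Matrix.diag, Matrix.mul_apply, Matrix.conjTranspose_apply,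
    Matrix.diagonal_apply, ite_mul, mul_ite, zero_mul, mul_zero, Finset.sum_ite_eq,
    Finset.sum_ite_eq', Finset.mem_univ, if_true, Complex.star_def]
  refine Finset.sum_congr rfl fun j _ => Finset.sum_congr rfl fun k _ => ?_
  ring

theorem gibbs_correlation_bounded (n : ℕ)
    (H : Matrix (Fin n) (Fin n) ℂ) (hH : H.IsHermitian)
    (beta : ℝ) (hbeta : 0 < beta)
    (rho : Matrix (Fin n) (Fin n) ℂ)
    (hrho : rho = ((NormedSpace.exp ((-beta : ℂ) • H)).trace)⁻¹ •
        NormedSpace.exp ((-beta : ℂ) • H))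
    (c : Matrix (Fin n) (Fin n) ℂ)
    (G : ℝ → ℂ)
    (hG : ∀ t : ℝ, G t = (rho * NormedSpace.exp ((Complex.I * t) • H) * c *
        NormedSpace.exp ((-(Complex.I * t)) • H) * cᴴ).trace) :
    (G 0).im = 0 ∧ ∀ t : ℝ, ‖G t‖ ≤ (G 0).re := by
  set U : Matrix (Fin n) (Fin n) ℂ := (hH.eigenvectorUnitary : Matrix (Fin n) (Fin n) ℂ) with hUdef
  set lam : Fin n → ℝ := hH.eigenvalues with hlam
  have hmul : U * star U = 1 := mem_unitaryGroup_iff.mp hH.eigenvectorUnitary.2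
  have hmul' : star U * U = 1 := mem_unitaryGroup_iff'.mp hH.eigenvectorUnitary.2
  have hc1 : ∀ X : Matrix (Fin n) (Fin n) ℂ, star U * (U * X) = X := fun X => by
    rw [← mul_assoc, hmul', one_mul]
  set b : Matrix (Fin n) (Fin n) ℂ := star U * c * U with hbdef
  have hbH : bᴴ = star U * cᴴ * U := by
    simp [hbdef, conjTranspose_mul, Matrix.star_eq_conjTranspose, mul_assoc]
  -- partition function as a real number
  set Zr : ℝ := ∑ j, Real.exp (-beta * lam j) with hZrdef
  have hZrnn : 0 ≤ Zr := Finset.sum_nonneg fun j _ => (Real.exp_pos _).le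
  have htr : ∀ M : Matrix (Fin n) (Fin n) ℂ, (U * M * star U).trace = M.trace := fun M => by
    rw [trace_mul_comm, ← mul_assoc, hmul', one_mul]
  have hZ : (NormedSpace.exp ((-beta : ℂ) • H)).trace = (Zr : ℂ) := by
    rw [exp_smul_herm n H hH, htr, trace_diagonal, hZrdef]
    push_cast [Complex.ofReal_exp]
    rfl
  -- the key matrix identity
  have hkey : ∀ D0 D1 D2 : Matrix (Fin n) (Fin n) ℂ,
      (U * D0 * star U) * (U * D1 * star U) * c * (U * D2 * star U) * cᴴ
        = U * (D0 * D1 * b * D2 * bᴴ) * star U := by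
    intro D0 D1 D2
    rw [hbH, hbdef]
    simp only [mul_assoc, hc1, hmul, mul_one]
  -- the explicit formula for G
  have hGt : ∀ t : ℝ, G t = ∑ j, ∑ k, (Zr : ℂ)⁻¹ *
      (cexp ((-beta : ℂ) * lam j) * cexp ((Complex.I * t) * lam j)
        * cexp ((-(Complex.I * t)) * lam k) * (b j k * (starRingEnd ℂ) (b j k))) := by
    intro t
    rw [hG, hrho, hZ, exp_smul_herm n H hH ((-beta : ℂ)),
      exp_smul_herm n H hH (Complex.I * t), exp_smul_herm n H hH (-(Complex.I * t))]
    rw [smul_mul_assoc, smul_mul_assoc, smul_mul_assoc, smul_mul_assoc, trace_smul, hkey,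
      htr, smul_eq_mul]
    rw [diagonal_mul_diagonal, trace_diag_sand]
    rw [Finset.mul_sum]
    refine Finset.sum_congr rfl fun j _ => ?_
    rw [Finset.mul_sum]
  -- the real coefficients
  set r : Fin n → Fin n → ℝ := fun j k =>
    Zr⁻¹ * (Real.exp (-beta * lam j) * Complex.normSq (b j k)) with hrdef
  have hrnn : ∀ j k, 0 ≤ r j k := fun j k => by
    have := Complex.normSq_nonneg (b j k)
    positivity
  have hterm0 : ∀ j k : Fin n, (Zr : ℂ)⁻¹ *
      (cexp ((-beta : ℂ) * lam j) * cexp ((Complex.I * (0:ℝ)) * lam j)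
        * cexp ((-(Complex.I * (0:ℝ))) * lam k) * (b j k * (starRingEnd ℂ) (b j k)))
      = (r j k : ℂ) := by
    intro j k
    rw [Complex.mul_conj]
    push_cast [hrdef, ← Complex.ofReal_exp]
    simp
  have htermabs : ∀ (t : ℝ) (j k : Fin n), ‖(Zr : ℂ)⁻¹ *
      (cexp ((-beta : ℂ) * lam j) * cexp ((Complex.I * t) * lam j)
        * cexp ((-(Complex.I * t)) * lam k) * (b j k * (starRingEnd ℂ) (b j k)))‖
      = r j k := by
    intro t j k
    rw [Complex.mul_conj]
    rw [norm_mul, norm_mul, norm_mul, norm_mul, norm_inv]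
    rw [Complex.norm_exp, Complex.norm_exp, Complex.norm_exp]
    have h1 : ((-beta : ℂ) * lam j).re = -beta * lam j := by
      simp
    have h2 : ((Complex.I * t) * lam j).re = 0 := by
      simp [Complex.mul_re]
    have h3 : ((-(Complex.I * t)) * lam k).re = 0 := by
      simp [Complex.mul_re]
    rw [h1, h2, h3, Real.exp_zero]
    rw [Complex.norm_real, Complex.norm_real, Real.norm_eq_abs, Real.norm_eq_abs]
    rw [abs_of_nonneg hZrnn, abs_of_nonneg (Complex.normSq_nonneg _)]
    simp only [hrdef]
    ring
  have hG0 : G 0 = ((∑ j, ∑ k, r j k : ℝ) : ℂ) := by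
    rw [hGt 0]
    push_cast
    exact Finset.sum_congr rfl fun j _ => Finset.sum_congr rfl fun k _ => hterm0 j k
  have hG0re : (G 0).re = ∑ j, ∑ k, r j k := by rw [hG0, Complex.ofReal_re]
  constructor
  · rw [hG0, Complex.ofReal_im]
  · intro t
    rw [hG0re, hGt t]
    calc ‖∑ j, ∑ k, (Zr : ℂ)⁻¹ *
          (cexp ((-beta : ℂ) * lam j) * cexp ((Complex.I * t) * lam j)
            * cexp ((-(Complex.I * t)) * lam k) * (b j k * (starRingEnd ℂ) (b j k)))‖
        ≤ ∑ j, ‖∑ k, (Zr : ℂ)⁻¹ *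
          (cexp ((-beta : ℂ) * lam j) * cexp ((Complex.I * t) * lam j)
            * cexp ((-(Complex.I * t)) * lam k) * (b j k * (starRingEnd ℂ) (b j k)))‖ :=
          norm_sum_le _ _
      _ ≤ ∑ j, ∑ k, ‖(Zr : ℂ)⁻¹ *
          (cexp ((-beta : ℂ) * lam j) * cexp ((Complex.I * t) * lam j)
            * cexp ((-(Complex.I * t)) * lam k) * (b j k * (starRingEnd ℂ) (b j k)))‖ :=
          Finset.sum_le_sum fun j _ => norm_sum_le _ _
      _ = ∑ j, ∑ k, r j k :=
          Finset.sum_congr rfl fun j _ => Finset.sum_congr rfl fun k _ => htermabs t j k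
end

section
/- Let T be an (n+1)×(n+1) Hermitian PSD Toeplitz matrix of rank r ≤ n. Then there exist r distinct unimodular complex numbers z₁,…,z_r and positive reals p₁,…,p_r such that T_{jk} = Σ_l p_l z_l^{j−k} for all 0 ≤ j,k ≤ n (Carathéodory–Fejér decomposition T = A P Aᴴ with Vandermonde A_{jl} = z_l^j and P = diag(p)). -/
open Matrix ComplexOrder

noncomputable section
namespace CF

variable {E : Type*} [NormedAddCommGroup E] [InnerProductSpace ℂ E] [FiniteDimensional ℂ E]

local notation "⟪" x ", " y "⟫" => @inner ℂ _ _ x y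

/-- Gram-equal finite families are related by a global isometry. -/
theorem exists_isometry_of_gram_eq {ι : Type*} [Fintype ι] (v w : ι → E)
    (hgram : ∀ i j, ⟪v i, v j⟫ = ⟪w i, w j⟫) :
    ∃ U : E →ₗᵢ[ℂ] E, ∀ i, U (v i) = w i := by
  classical
  let F : (ι → ℂ) →ₗ[ℂ] E :=
    { toFun := fun c => ∑ i, c i • v i
      map_add' := fun c d => by simp [add_smul, Finset.sum_add_distrib]
      map_smul' := fun a c => by simp [Finset.smul_sum, smul_smul] }
  let G : (ι → ℂ) →ₗ[ℂ] E :=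
    { toFun := fun c => ∑ i, c i • w i
      map_add' := fun c d => by simp [add_smul, Finset.sum_add_distrib]
      map_smul' := fun a c => by simp [Finset.smul_sum, smul_smul] }
  have hFG : ∀ c d, ⟪F c, F d⟫ = ⟪G c, G d⟫ := by
    intro c d
    simp only [F, G, LinearMap.coe_mk, AddHom.coe_mk, sum_inner, inner_sum, inner_smul_left,
      inner_smul_right, hgram]
  have hnorm : ∀ c, ‖F c‖ = ‖G c‖ := by
    intro c
    have h := hFG c c
    rw [inner_self_eq_norm_sq_to_K, inner_self_eq_norm_sq_to_K] at h
    have h2 : (‖F c‖ : ℝ) ^ 2 = ‖G c‖ ^ 2 := by exact_mod_cast h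
    exact (pow_left_inj₀ (norm_nonneg _) (norm_nonneg _) two_ne_zero).mp h2
  have hker : LinearMap.ker F ≤ LinearMap.ker G := by
    intro c hc
    rw [LinearMap.mem_ker] at hc ⊢
    have := hnorm c
    rw [hc, norm_zero] at this
    exact norm_eq_zero.mp this.symm
  -- the isometry from range F to E
  let L' : ((ι → ℂ) ⧸ LinearMap.ker F) →ₗ[ℂ] E := (LinearMap.ker F).liftQ G hker
  let e := F.quotKerEquivRange
  let Lmap : LinearMap.range F →ₗ[ℂ] E := L'.comp e.symm.toLinearMap
  have hLmap : ∀ c, Lmap ⟨F c, LinearMap.mem_range_self F c⟩ = G c := by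
    intro c
    have he : e.symm ⟨F c, LinearMap.mem_range_self F c⟩ = Submodule.Quotient.mk c := by
      rw [LinearEquiv.symm_apply_eq]
      exact Subtype.ext (F.quotKerEquivRange_apply_mk c).symm
    simp only [Lmap, LinearMap.comp_apply, LinearEquiv.coe_toLinearMap, he]
    exact Submodule.liftQ_apply _ G c
  have hLnorm : ∀ x : LinearMap.range F, ‖Lmap x‖ = ‖x‖ := by
    rintro ⟨_, c, rfl⟩
    rw [hLmap c]
    exact (hnorm c).symm
  let L : LinearMap.range F →ₗᵢ[ℂ] E := ⟨Lmap, hLnorm⟩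
  refine ⟨L.extend, fun i => ?_⟩
  have hv : F (Pi.single i 1) = v i := by
    simp [F, Pi.single_apply, Finset.sum_ite_eq']
  have hw : G (Pi.single i 1) = w i := by
    simp [G, Pi.single_apply, Finset.sum_ite_eq']
  have : v i = ((⟨F (Pi.single i 1), LinearMap.mem_range_self F _⟩ : LinearMap.range F) : E) := by
    simp [hv]
  rw [this, LinearIsometry.extend_apply]
  show Lmap _ = w i
  rw [hLmap, hw]

theorem isometry_iSup_eigenspace_eq_top (U : E →ₗᵢ[ℂ] E) :
    ⨆ μ : ℂ, Module.End.eigenspace U.toLinearMap μ = ⊤ := by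
  set A : Module.End ℂ E := U.toLinearMap with hA
  have hstar : LinearMap.adjoint A * A = 1 := by
    apply LinearMap.ext
    intro x
    apply ext_inner_right ℂ
    intro y
    rw [Module.End.mul_apply, LinearMap.adjoint_inner_left]
    exact U.inner_map_map x y
  have hstar' : A * LinearMap.adjoint A = 1 := by
    rwa [mul_eq_one_comm] at hstar
  set H : Module.End ℂ E := A + LinearMap.adjoint A with hH
  set K : Module.End ℂ E := Complex.I • (A - LinearMap.adjoint A) with hK
  have hHsym : H.IsSymmetric := by
    rw [LinearMap.isSymmetric_iff_isSelfAdjoint]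
    rw [LinearMap.isSelfAdjoint_iff']
    simp [hH, map_add, LinearMap.adjoint_adjoint, add_comm]
  have hKsym : K.IsSymmetric := by
    rw [LinearMap.isSymmetric_iff_isSelfAdjoint]
    rw [LinearMap.isSelfAdjoint_iff']
    rw [hK, LinearEquiv.map_smulₛₗ, map_sub, LinearMap.adjoint_adjoint, Complex.conj_I]
    module
  have hcomm : Commute H K := by
    show H * K = K * H
    simp only [hH, hK]
    rw [mul_smul_comm, smul_mul_assoc]
    congr 1
    rw [add_mul, mul_sub, mul_sub, sub_mul, mul_add, mul_add, hstar, hstar']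
    abel
  have htop := hHsym.iSup_iSup_eigenspace_inf_eigenspace_eq_top_of_commute hKsym hcomm
  refine le_antisymm le_top ?_
  rw [← htop]
  refine iSup_le fun α => iSup_le fun β => le_trans ?_ (le_iSup _ ((α - Complex.I * β) / 2))
  intro x hx
  obtain ⟨hx1, hx2⟩ := Submodule.mem_inf.mp hx
  rw [Module.End.mem_eigenspace_iff] at hx1 hx2 ⊢
  have hAx : (2 : ℂ) • A x = α • x - Complex.I • (β • x) := by
    have : (2 : ℂ) • A = H - Complex.I • K := by
      simp only [hH, hK, smul_smul, Complex.I_mul_I]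
      module
    calc (2 : ℂ) • A x = ((2 : ℂ) • A) x := rfl
      _ = H x - Complex.I • K x := by rw [this]; simp
      _ = α • x - Complex.I • (β • x) := by rw [hx1, hx2]
  have : A x = ((α - Complex.I * β) / 2) • x := by
    have h2 : ((2:ℂ)⁻¹ * 2 : ℂ) = 1 := by norm_num
    calc A x = (2:ℂ)⁻¹ • ((2:ℂ) • A x) := by rw [smul_smul, h2, one_smul]
      _ = (2:ℂ)⁻¹ • (α • x - Complex.I • (β • x)) := by rw [hAx]
      _ = ((α - Complex.I * β) / 2) • x := by
          rw [smul_sub, smul_smul, smul_smul, smul_smul, ← sub_smul]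
          congr 1
          ring
  exact this

lemma zpow_of_unimodular {z : ℂ} (hz : ‖z‖ = 1) (j k : ℕ) :
    z ^ ((j : ℤ) - (k : ℤ)) = z ^ j * (starRingEnd ℂ z) ^ k := by
  have hz0 : z ≠ 0 := by
    intro h; rw [h] at hz; simp at hz
  have hinv : z⁻¹ = starRingEnd ℂ z := by
    rw [Complex.inv_def]
    rw [Complex.normSq_eq_norm_sq, hz]
    simp
  rw [zpow_sub₀ hz0, zpow_natCast, zpow_natCast, div_eq_mul_inv, ← inv_pow, hinv]

lemma vandermonde_rank {m N : ℕ} (hm : m ≤ N) (z : Fin m → ℂ) (hinj : Function.Injective z) :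
    (Matrix.of fun (j : Fin N) (l : Fin m) => z l ^ (j : ℕ)).rank = m := by
  set A := Matrix.of fun (j : Fin N) (l : Fin m) => z l ^ (j : ℕ) with hA
  set C := A.submatrix (Fin.castLE hm) id with hC
  have hCv : C = (Matrix.vandermonde z)ᵀ := by
    ext i j
    simp [hC, hA, Matrix.vandermonde, Matrix.submatrix_apply]
  have hdet : C.det ≠ 0 := by
    rw [hCv, Matrix.det_transpose]
    rw [Matrix.det_vandermonde_ne_zero_iff]
    exact hinj
  have h1 : C.rank = m := by
    rw [Matrix.rank_of_isUnit C ((Matrix.isUnit_iff_isUnit_det C).mpr (isUnit_iff_ne_zero.mpr hdet))]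
    simp
  have h2 : C.rank ≤ A.rank := by
    have hfac : ((1 : Matrix (Fin N) (Fin N) ℂ).submatrix (Fin.castLE hm) (Equiv.refl (Fin N))) * A
        = C := by
      rw [Matrix.one_submatrix_mul]
      rfl
    rw [← hfac]
    exact Matrix.rank_mul_le_right _ _
  have h3 : A.rank ≤ m := le_trans (Matrix.rank_le_card_width A) (by simp)
  omega

end CF

open CF

theorem caratheodory_fejer_decomposition (n r : ℕ) (hr : r ≤ n)
    (T : Matrix (Fin (n + 1)) (Fin (n + 1)) ℂ)
    (hT : T.PosSemidef)
    (hToeplitz : ∀ j k j' k' : Fin (n + 1),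
      (j : ℤ) - (k : ℤ) = (j' : ℤ) - (k' : ℤ) → T j k = T j' k')
    (hrank : T.rank = r) :
    ∃ (z : Fin r → ℂ) (p : Fin r → ℝ),
      Function.Injective z ∧
      (∀ l, ‖z l‖ = 1) ∧
      (∀ l, 0 < p l) ∧
      (∀ j k : Fin (n + 1), T j k = ∑ l : Fin r, (p l : ℂ) * z l ^ ((j : ℤ) - (k : ℤ))) ∧
      T = (Matrix.of fun (j : Fin (n + 1)) (l : Fin r) => z l ^ (j : ℕ)) *
            Matrix.diagonal (fun l => (p l : ℂ)) *
            (Matrix.of fun (j : Fin (n + 1)) (l : Fin r) => z l ^ (j : ℕ))ᴴ := by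
  classical
  open scoped MatrixOrder in
  obtain ⟨B, hB⟩ := CStarAlgebra.nonneg_iff_eq_star_mul_self.mp hT.nonneg
  -- columns of B as vectors in Euclidean space
  set b : Fin (n + 1) → EuclideanSpace ℂ (Fin (n + 1)) :=
    fun j => (WithLp.toLp 2 (fun i => B i j) : EuclideanSpace ℂ (Fin (n + 1))) with hb
  have hbT : ∀ j k, T j k = @inner ℂ _ _ (b j) (b k) := by
    intro j k
    rw [hB, Matrix.star_eq_conjTranspose]
    simp only [Matrix.mul_apply, Matrix.conjTranspose_apply, PiLp.inner_apply,
      RCLike.inner_apply, hb]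
    exact Finset.sum_congr rfl fun _ _ => mul_comm _ _
  -- the shift isometry
  obtain ⟨U, hU⟩ := exists_isometry_of_gram_eq
      (fun j : Fin n => b j.castSucc) (fun j : Fin n => b j.succ) (by
    intro i j
    rw [← hbT, ← hbT]
    apply hToeplitz
    push_cast [Fin.coe_castSucc, Fin.val_succ]
    ring)
  have hpow : ∀ j : Fin (n + 1), b j = (U.toLinearMap ^ (j : ℕ)) (b 0) := by
    intro j
    induction j using Fin.induction with
    | zero => simp
    | succ i ih =>
        have h1 : b i.castSucc = (U.toLinearMap ^ ((i : ℕ))) (b 0) := by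
          have := ih
          simpa [Fin.coe_castSucc] using this
        calc b i.succ = U (b i.castSucc) := (hU i).symm
          _ = U.toLinearMap ((U.toLinearMap ^ (i : ℕ)) (b 0)) := by
              rw [h1]; rfl
          _ = (U.toLinearMap ^ ((i.succ : ℕ))) (b 0) := by
              rw [Fin.val_succ, pow_succ']
              rfl
  -- spectral decomposition of b 0
  have hmem : b 0 ∈ ⨆ μ : ℂ, Module.End.eigenspace U.toLinearMap μ := by
    rw [isometry_iSup_eigenspace_eq_top U]
    exact Submodule.mem_top
  obtain ⟨f, hf, hsum⟩ := (Submodule.mem_iSup_iff_exists_finsupp _ _).mp hmem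
  set s : Finset ℂ := f.support with hs
  have hsum' : ∑ μ ∈ s, f μ = b 0 := hsum
  have hUf : ∀ μ ∈ s, U.toLinearMap (f μ) = μ • f μ := by
    intro μ _
    exact Module.End.mem_eigenspace_iff.mp (hf μ)
  have hfne : ∀ μ ∈ s, f μ ≠ 0 := fun μ hμ => Finsupp.mem_support_iff.mp hμ
  have huni : ∀ μ ∈ s, ‖μ‖ = 1 := by
    intro μ hμ
    have h1 : ‖U (f μ)‖ = ‖f μ‖ := U.norm_map (f μ)
    have h2 : U (f μ) = μ • f μ := hUf μ hμ
    rw [h2, norm_smul] at h1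
    have h3 : ‖f μ‖ ≠ 0 := norm_ne_zero_iff.mpr (hfne μ hμ)
    field_simp at h1
    tauto
  have horth : ∀ μ ∈ s, ∀ ν ∈ s, μ ≠ ν → (inner ℂ (f μ) (f ν) : ℂ) = 0 := by
    intro μ hμ ν hν hne
    by_contra h0
    have h := U.inner_map_map (f μ) (f ν)
    rw [show U (f μ) = U.toLinearMap (f μ) from rfl, show U (f ν) = U.toLinearMap (f ν) from rfl,
      hUf μ hμ, hUf ν hν, inner_smul_left, inner_smul_right] at h
    have h1 : (starRingEnd ℂ μ * ν) * (inner ℂ (f μ) (f ν) : ℂ) = 1 * (inner ℂ (f μ) (f ν) : ℂ) := by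
      rw [one_mul, mul_assoc, h]
    have h2 : starRingEnd ℂ μ * ν = 1 := mul_right_cancel₀ h0 h1
    have h3 : μ * starRingEnd ℂ μ = 1 := by
      rw [Complex.mul_conj]
      norm_cast
      rw [Complex.normSq_eq_norm_sq, huni μ hμ]
      norm_num
    have : ν = μ := by
      calc ν = (μ * starRingEnd ℂ μ) * ν := by rw [h3, one_mul]
        _ = μ * (starRingEnd ℂ μ * ν) := by ring
        _ = μ := by rw [h2, mul_one]
    exact hne this.symm
  have hpoweig : ∀ μ ∈ s, ∀ m : ℕ, (U.toLinearMap ^ m) (f μ) = μ ^ m • f μ := by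
    intro μ hμ m
    induction m with
    | zero => simp
    | succ m ih =>
        rw [pow_succ', Module.End.mul_apply, ih, LinearMap.map_smul, hUf μ hμ, smul_smul,
          ← pow_succ]
  -- entrywise formula over the support
  have hTjk : ∀ j k : Fin (n + 1),
      T j k = ∑ μ ∈ s, (starRingEnd ℂ μ) ^ (j : ℕ) * μ ^ (k : ℕ) * ((‖f μ‖ : ℂ) ^ 2) := by
    intro j k
    rw [hbT, hpow j, hpow k, ← hsum', map_sum, map_sum]
    rw [Finset.sum_congr rfl fun μ hμ => hpoweig μ hμ (j : ℕ),
      Finset.sum_congr rfl fun μ hμ => hpoweig μ hμ (k : ℕ)]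
    rw [sum_inner]
    rw [Finset.sum_congr rfl fun μ hμ => inner_sum s _ _]
    rw [Finset.sum_congr rfl (fun μ hμ => Finset.sum_congr rfl fun ν hν => by
      rw [inner_smul_left, inner_smul_right])]
    rw [Finset.sum_congr rfl (fun μ hμ => Finset.sum_eq_single μ
      (fun ν hν hne => by rw [horth μ hμ ν hν (Ne.symm hne)]; ring)
      (fun hμ' => absurd hμ hμ'))]
    refine Finset.sum_congr rfl fun μ hμ => ?_
    rw [inner_self_eq_norm_sq_to_K, map_pow, mul_assoc]
    norm_cast
  -- enumerate the support
  set m := s.card with hm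
  let es : Fin m ≃ {x // x ∈ s} := (Fintype.equivFinOfCardEq (Fintype.card_coe s)).symm
  let g : Fin m → ℂ := fun l => (es l : ℂ)
  have hgmem : ∀ l, g l ∈ s := fun l => (es l).2
  have hginj : Function.Injective g := fun a b h => es.injective (Subtype.ext h)
  have hsumconv : ∀ F : ℂ → ℂ, ∑ μ ∈ s, F μ = ∑ l : Fin m, F (g l) := by
    intro F
    rw [← Finset.sum_coe_sort s F]
    exact (Equiv.sum_comp es (fun x => F (x : ℂ))).symm
  set z : Fin m → ℂ := fun l => starRingEnd ℂ (g l) with hz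
  set p : Fin m → ℝ := fun l => ‖f (g l)‖ ^ 2 with hp
  have hzinj : Function.Injective z := by
    intro a c h
    apply hginj
    have := congrArg (starRingEnd ℂ) h
    simpa [hz, Complex.conj_conj] using this
  have hzu : ∀ l, ‖z l‖ = 1 := by
    intro l
    rw [hz]
    simp only [Complex.norm_conj]
    exact huni _ (hgmem l)
  have hppos : ∀ l, 0 < p l := by
    intro l
    exact pow_pos (norm_pos_iff.mpr (hfne _ (hgmem l))) 2
  -- entrywise formula over Fin m
  have hentry : ∀ j k : Fin (n + 1),
      T j k = ∑ l : Fin m, z l ^ (j : ℕ) * (p l : ℂ) * (starRingEnd ℂ (z l)) ^ (k : ℕ) := by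
    intro j k
    rw [hTjk j k, hsumconv]
    refine Finset.sum_congr rfl fun l _ => ?_
    rw [hz, hp]
    simp only [Complex.conj_conj]
    push_cast
    ring
  -- the two forms of the conclusion
  set A : Matrix (Fin (n + 1)) (Fin m) ℂ :=
    Matrix.of (fun (j : Fin (n + 1)) (l : Fin m) => z l ^ (j : ℕ)) with hA
  have hmat : T = A * Matrix.diagonal (fun l => (p l : ℂ)) * Aᴴ := by
    ext j k
    rw [Matrix.mul_apply]
    rw [hentry j k]
    refine Finset.sum_congr rfl fun l _ => ?_
    rw [Matrix.mul_diagonal, Matrix.conjTranspose_apply, hA]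
    simp only [Matrix.of_apply]
    rw [RCLike.star_def, map_pow]
  have hform : ∀ j k : Fin (n + 1),
      T j k = ∑ l : Fin m, (p l : ℂ) * z l ^ ((j : ℤ) - (k : ℤ)) := by
    intro j k
    rw [hentry j k]
    refine Finset.sum_congr rfl fun l _ => ?_
    rw [zpow_of_unimodular (hzu l)]
    ring
  -- linear independence of eigenvectors gives m ≤ n + 1
  have hli : LinearIndependent ℂ (fun x : {x // x ∈ s} => f (x : ℂ)) :=
    Module.End.eigenvectors_linearIndependent' U.toLinearMap
      (fun x : {x // x ∈ s} => (x : ℂ)) Subtype.coe_injective _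
      (fun x => ⟨hf (x : ℂ), hfne _ x.2⟩)
  have hmn : m ≤ n + 1 := by
    have h1 := hli.fintype_card_le_finrank
    rwa [Fintype.card_coe, finrank_euclideanSpace, Fintype.card_fin] at h1
  -- rank computation
  have hAr : A.rank = m := vandermonde_rank hmn z hzinj
  have hrm : T.rank = m := by
    have hq : A * Matrix.diagonal (fun l => (p l : ℂ)) * Aᴴ =
        (A * Matrix.diagonal (fun l => (Real.sqrt (p l) : ℂ))) *
        (A * Matrix.diagonal (fun l => (Real.sqrt (p l) : ℂ)))ᴴ := by
      have hstar : star (fun l => (Real.sqrt (p l) : ℂ)) = fun l => (Real.sqrt (p l) : ℂ) := by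
        funext l
        simp [Pi.star_apply, Complex.conj_ofReal]
      have hd : (fun l => (Real.sqrt (p l) : ℂ) * (Real.sqrt (p l) : ℂ)) =
          fun l => (p l : ℂ) := by
        funext l
        rw [← Complex.ofReal_mul, Real.mul_self_sqrt (hppos l).le]
      rw [Matrix.conjTranspose_mul, Matrix.diagonal_conjTranspose, hstar]
      simp only [Matrix.mul_assoc]
      rw [← Matrix.mul_assoc (Matrix.diagonal (fun l => (Real.sqrt (p l) : ℂ)))
        (Matrix.diagonal (fun l => (Real.sqrt (p l) : ℂ))) Aᴴ, Matrix.diagonal_mul_diagonal, hd]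
    have hdet : IsUnit (Matrix.diagonal (fun l => (Real.sqrt (p l) : ℂ))).det := by
      rw [Matrix.det_diagonal]
      apply isUnit_iff_ne_zero.mpr
      apply Finset.prod_ne_zero_iff.mpr
      intro l _
      simp only [ne_eq, Complex.ofReal_eq_zero]
      exact (Real.sqrt_pos.mpr (hppos l)).ne'
    rw [hmat, hq, Matrix.rank_self_mul_conjTranspose,
      Matrix.rank_mul_eq_left_of_isUnit_det _ A hdet, hAr]
  have hmr : m = r := by rw [← hrm, hrank]
  subst hmr
  exact ⟨z, p, hzinj, hzu, hppos, hform, hmat⟩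
end
end
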